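/- arXiv:2412.06722 — 3 statements merged into one kernel-verified Lean document; each statement's English description precedes it below -/
import Mathlib

section
/- Let θ > 1, a₁, a₂, a₃, a₄ ∈ (0,∞), p₁ ∈ (2θ,∞) and q₁ ∈ (0,2). Set t₁ = 2θ(2θ−q₁)(2θ−2)/(p₁(p₁−q₁)(p₁−2)) and suppose (t₁^{(2θ−q₁)/(p₁−2θ)} − t₁^{(p₁−q₁)/(p₁−2θ)})·[(a₁/a₄)(a₂/a₃)^{(2−q₁)/(p₁−2θ)} + (1/a₄)·a₂^{(p₁−q₁)/(p₁−2θ)}/a₃^{(2θ−q₁)/(p₁−2θ)}] > 1. Then the function h(t) = a₁t² + a₂t^{2θ} − a₃t^{p₁} − a₄t^{q₁} has a global strict maximum at a positive level and a local strict minimum at a negative level on [0,∞). -/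
/- Common framework for normalized solutions of Kirchhoff-Choquard equations
   (Goel-Gupta, "Normalized Solutions to the Kirchhoff-Choquard Equations with
   Combined Growth"). Functions are modelled as `u : EuclideanSpace ℝ (Fin N) → ℝ`. -/

open MeasureTheory Real Filter Topology RealInnerProductSpace

noncomputable section

abbrev Euc (N : ℕ) := EuclideanSpace ℝ (Fin N)

/-- `‖∇u‖₂²`. -/
def gradNormSq (N : ℕ) (u : Euc N → ℝ) : ℝ := ∫ x, ‖gradient u x‖ ^ 2

/-- `‖u‖₂²`. -/
def l2NormSq (N : ℕ) (u : Euc N → ℝ) : ℝ := ∫ x, u x ^ 2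

/-- membership in `H¹(ℝᴺ)`. -/
def MemH1 (N : ℕ) (u : Euc N → ℝ) : Prop :=
  MemLp u 2 (volume : Measure (Euc N)) ∧ Differentiable ℝ u ∧
    MemLp (fun x => gradient u x) 2 (volume : Measure (Euc N))

/-- squared `H¹` norm. -/
def h1NormSq (N : ℕ) (u : Euc N → ℝ) : ℝ := l2NormSq N u + gradNormSq N u

/-- `∫ ∇u·∇v`. -/
def gradInner (N : ℕ) (u v : Euc N → ℝ) : ℝ := ∫ x, ⟪gradient u x, gradient v x⟫

/-- `∫ u v`. -/
def l2Pair (N : ℕ) (u v : Euc N → ℝ) : ℝ := ∫ x, u x * v x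

/-- the nonlocal Choquard term `∫ (I_μ ∗ |u|^t) |u|^t`. -/
def rieszTerm (N : ℕ) (μ t : ℝ) (u : Euc N → ℝ) : ℝ :=
  ∫ x, ∫ y, |u x| ^ t * |u y| ^ t / ‖x - y‖ ^ μ

/-- `∫ (I_μ ∗ |u|^t) |u|^{t-2} u v`. -/
def rieszPair (N : ℕ) (μ t : ℝ) (u v : Euc N → ℝ) : ℝ :=
  ∫ x, (∫ y, |u y| ^ t / ‖x - y‖ ^ μ) * |u x| ^ (t - 2) * u x * v x

/-- the energy functional `J_α`. -/
def Jfun (N : ℕ) (a b θ μ α q p : ℝ) (u : Euc N → ℝ) : ℝ :=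
  a / 2 * gradNormSq N u + b / (2 * θ) * gradNormSq N u ^ θ
    - α / (2 * q) * rieszTerm N μ q u - 1 / (2 * p) * rieszTerm N μ p u

/-- membership in the sphere `S_c`. -/
def InSc (N : ℕ) (c : ℝ) (u : Euc N → ℝ) : Prop := MemH1 N u ∧ l2NormSq N u = c ^ 2

def IsRadial (N : ℕ) (u : Euc N → ℝ) : Prop := ∀ x y : Euc N, ‖x‖ = ‖y‖ → u x = u y

def IsRadialDecreasing (N : ℕ) (u : Euc N → ℝ) : Prop :=
  ∀ x y : Euc N, ‖x‖ ≤ ‖y‖ → u y ≤ u x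

/-- `δ_r = (N(r-2)+μ)/(2r)`. -/
def deltaExp (N : ℕ) (μ r : ℝ) : ℝ := ((N : ℝ) * (r - 2) + μ) / (2 * r)

/-- the upper critical exponent `2*_μ = (2N-μ)/(N-2)`. -/
def tmu (N : ℕ) (μ : ℝ) : ℝ := (2 * (N : ℝ) - μ) / ((N : ℝ) - 2)

/-- the Pohozaev functional `P_α`. -/
def Pfun (N : ℕ) (a b θ μ α q p : ℝ) (u : Euc N → ℝ) : ℝ :=
  a * gradNormSq N u + b * gradNormSq N u ^ θ
    - deltaExp N μ q * α * rieszTerm N μ q u - deltaExp N μ p * rieszTerm N μ p u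

/-- the (Gateaux) derivative of `J_α` at `u` in direction `v`. -/
def Jderiv (N : ℕ) (a b θ μ α q p : ℝ) (u v : Euc N → ℝ) : ℝ :=
  (a + b * gradNormSq N u ^ (θ - 1)) * gradInner N u v
    - α * rieszPair N μ q u v - rieszPair N μ p u v

/-- `u ∈ S_c` is a weak solution of problem (1.1) with Lagrange multiplier `lam`. -/
def IsSolution (N : ℕ) (a b θ μ α q p c lam : ℝ) (u : Euc N → ℝ) : Prop :=
  InSc N c u ∧ ∀ v : Euc N → ℝ, MemH1 N v →
    (a + b * gradNormSq N u ^ (θ - 1)) * gradInner N u v =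
      lam * l2Pair N u v + α * rieszPair N μ q u v + rieszPair N μ p u v

/-- `u` is a critical point of `J_α|_{S_c}`. -/
def IsCriticalPt (N : ℕ) (a b θ μ α q p c : ℝ) (u : Euc N → ℝ) : Prop :=
  ∃ lam : ℝ, IsSolution N a b θ μ α q p c lam u

/-- `u` is a ground state solution of `J_α|_{S_c}`. -/
def IsGroundState (N : ℕ) (a b θ μ α q p c : ℝ) (u : Euc N → ℝ) : Prop :=
  IsCriticalPt N a b θ μ α q p c u ∧
    ∀ v, IsCriticalPt N a b θ μ α q p c v →
      Jfun N a b θ μ α q p u ≤ Jfun N a b θ μ α q p v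

/-- the sharp Gagliardo-Nirenberg constant `C_r`. -/
def GNsharp (N : ℕ) (μ r : ℝ) : ℝ :=
  sInf {C : ℝ | 0 ≤ C ∧ ∀ u : Euc N → ℝ, MemH1 N u →
    rieszTerm N μ r u ≤
      C * gradNormSq N u ^ (r * deltaExp N μ r) * l2NormSq N u ^ (r * (1 - deltaExp N μ r))}

/-- the Hardy-Littlewood-Sobolev best constant `S_{HL}`. -/
def S_HL (N : ℕ) (μ : ℝ) : ℝ :=
  sInf {t : ℝ | ∃ u : Euc N → ℝ, Differentiable ℝ u ∧
    MemLp (fun x => gradient u x) 2 (volume : Measure (Euc N)) ∧ u ≠ 0 ∧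
    t = gradNormSq N u / rieszTerm N μ (tmu N μ) u ^ (((N : ℝ) - 2) / (2 * (N : ℝ) - μ))}

/-- `C_r` for `r < 2*_μ`, and `S_HL^{-2*_μ}` for `r = 2*_μ`. -/
def Cconst (N : ℕ) (μ r : ℝ) : ℝ :=
  if r = tmu N μ then S_HL N μ ^ (-(tmu N μ)) else GNsharp N μ r

/-- the threshold `α₁` of (2.6). -/
def alpha1 (N : ℕ) (μ θ b c q p : ℝ) : ℝ :=
  (b * (θ - q * deltaExp N μ q) /
      (deltaExp N μ p * (p * deltaExp N μ p - q * deltaExp N μ q) * Cconst N μ p *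
        c ^ (2 * p * (1 - deltaExp N μ p)))) ^
    ((θ - q * deltaExp N μ q) / (p * deltaExp N μ p - θ)) *
  (b * (p * deltaExp N μ p - θ) /
    (deltaExp N μ q * (p * deltaExp N μ p - q * deltaExp N μ q) * Cconst N μ q *
      c ^ (2 * q * (1 - deltaExp N μ q))))

/-- the constant `κ` of (2.9). -/
def kappaConst (N : ℕ) (μ θ q p : ℝ) : ℝ :=
  (θ * (θ - q * deltaExp N μ q) * (θ - 1) /
      (p * deltaExp N μ p * (p * deltaExp N μ p - q * deltaExp N μ q) *
        (p * deltaExp N μ p - 1))) ^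
    ((θ - q * deltaExp N μ q) / (p * deltaExp N μ p - θ)) -
  (θ * (θ - q * deltaExp N μ q) * (θ - 1) /
      (p * deltaExp N μ p * (p * deltaExp N μ p - q * deltaExp N μ q) *
        (p * deltaExp N μ p - 1))) ^
    ((p * deltaExp N μ p - q * deltaExp N μ q) / (p * deltaExp N μ p - θ))

/-- the threshold `α₂` of (2.7). -/
def alpha2 (N : ℕ) (μ θ a b c q p : ℝ) : ℝ :=
  kappaConst N μ θ q p * q / Cconst N μ q *
    (a / c ^ (2 * q * (1 - deltaExp N μ q) +
        2 * p * (1 - deltaExp N μ p) * (1 - q * deltaExp N μ q) / (p * deltaExp N μ p - θ)) *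
      (b * p / (θ * Cconst N μ p)) ^ ((1 - q * deltaExp N μ q) / (p * deltaExp N μ p - θ)) +
    2 / c ^ (2 * q * (1 - deltaExp N μ q) +
        2 * p * (1 - deltaExp N μ p) * (θ - q * deltaExp N μ q) / (p * deltaExp N μ p - θ)) *
      ((b / (2 * θ)) ^ ((p * deltaExp N μ p - q * deltaExp N μ q) / (p * deltaExp N μ p - θ)) /
        (Cconst N μ p / (2 * p)) ^ ((θ - q * deltaExp N μ q) / (p * deltaExp N μ p - θ))))

/-- the threshold `α₃` of (2.8). -/
def alpha3 (N : ℕ) (μ θ a b c q : ℝ) : ℝ :=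
  ((S_HL N μ ^ (θ + 1) * (4 * a * b)) ^ (tmu N μ / (2 * tmu N μ - (θ + 1))) *
      (q / (θ - q * deltaExp N μ q))) ^ ((θ - q * deltaExp N μ q) / θ) *
    (b / deltaExp N μ q) ^ (q * deltaExp N μ q / θ) * (tmu N μ - θ) /
    ((tmu N μ - q * deltaExp N μ q) * Cconst N μ q * c ^ (2 * q * (1 - deltaExp N μ q)))

/-- `Υ_{t₀} = {u ∈ S_c : ‖∇u‖₂ < t₀}`. -/
def Upsilon (N : ℕ) (c t₀ : ℝ) : Set (Euc N → ℝ) :=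
  {u | InSc N c u ∧ Real.sqrt (gradNormSq N u) < t₀}

/-- the comparison function `g` of Lemma 4.3. -/
def gComp (N : ℕ) (a b θ μ α q p c : ℝ) (t : ℝ) : ℝ :=
  a / 2 * t ^ (2 : ℝ) + b / (2 * θ) * t ^ (2 * θ)
    - α / (2 * q) * Cconst N μ q * c ^ (2 * q * (1 - deltaExp N μ q)) *
        t ^ (2 * q * deltaExp N μ q)
    - 1 / (2 * p) * Cconst N μ p * c ^ (2 * p * (1 - deltaExp N μ p)) *
        t ^ (2 * p * deltaExp N μ p)

/-- `t₀` is the first zero of `g` on `(0,∞)`. -/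
def IsFirstZero (g : ℝ → ℝ) (t₀ : ℝ) : Prop :=
  0 < t₀ ∧ g t₀ = 0 ∧ ∀ t, 0 < t → t < t₀ → g t ≠ 0

/-- the dilation `(s ⋆ u)(x) = e^{Ns/2} u(e^s x)`. -/
def starMap (N : ℕ) (s : ℝ) (u : Euc N → ℝ) : Euc N → ℝ :=
  fun x => Real.exp ((N : ℝ) * s / 2) * u (Real.exp s • x)

/-- the fiber map `E_u(s) = J_α(s ⋆ u)`. -/
def fiberE (N : ℕ) (a b θ μ α q p : ℝ) (u : Euc N → ℝ) (s : ℝ) : ℝ :=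
  Jfun N a b θ μ α q p (starMap N s u)

/-- `(E_u)''(0)` in closed form. -/
def fiberE2 (N : ℕ) (a b θ μ α q p : ℝ) (u : Euc N → ℝ) : ℝ :=
  2 * a * gradNormSq N u + 2 * θ * b * gradNormSq N u ^ θ
    - α * (2 * q) * deltaExp N μ q ^ 2 * rieszTerm N μ q u
    - 2 * p * deltaExp N μ p ^ 2 * rieszTerm N μ p u

/-- the Pohozaev manifold `𝔓_α`. -/
def Pman (N : ℕ) (a b θ μ α q p c : ℝ) : Set (Euc N → ℝ) :=
  {u | InSc N c u ∧ Pfun N a b θ μ α q p u = 0}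

def PmanPlus (N : ℕ) (a b θ μ α q p c : ℝ) : Set (Euc N → ℝ) :=
  {u | u ∈ Pman N a b θ μ α q p c ∧ 0 < fiberE2 N a b θ μ α q p u}

def PmanMinus (N : ℕ) (a b θ μ α q p c : ℝ) : Set (Euc N → ℝ) :=
  {u | u ∈ Pman N a b θ μ α q p c ∧ fiberE2 N a b θ μ α q p u < 0}

def PmanZero (N : ℕ) (a b θ μ α q p c : ℝ) : Set (Euc N → ℝ) :=
  {u | u ∈ Pman N a b θ μ α q p c ∧ fiberE2 N a b θ μ α q p u = 0}

/-- a Palais-Smale sequence for `J_α|_{S_c}` at level `l` (Lagrange-multiplier form). -/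
def IsPalaisSmale (N : ℕ) (a b θ μ α q p c l : ℝ) (un : ℕ → Euc N → ℝ) : Prop :=
  (∀ n, InSc N c (un n)) ∧
  Tendsto (fun n => Jfun N a b θ μ α q p (un n)) atTop (𝓝 l) ∧
  ∃ lam : ℕ → ℝ, ∃ ε : ℕ → ℝ, Tendsto ε atTop (𝓝 0) ∧
    ∀ n, ∀ v : Euc N → ℝ, MemH1 N v → h1NormSq N v ≤ 1 →
      |Jderiv N a b θ μ α q p (un n) v - lam n * l2Pair N (un n) v| ≤ ε n

/-- strong convergence in `H¹(ℝᴺ)`. -/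
def StrongH1Tendsto (N : ℕ) (un : ℕ → Euc N → ℝ) (u : Euc N → ℝ) : Prop :=
  Tendsto (fun n => h1NormSq N (fun x => un n x - u x)) atTop (𝓝 0)

/-- weak convergence in `H¹(ℝᴺ)`. -/
def WeakH1Tendsto (N : ℕ) (un : ℕ → Euc N → ℝ) (u : Euc N → ℝ) : Prop :=
  ∀ v : Euc N → ℝ, MemH1 N v →
    Tendsto (fun n => l2Pair N (un n) v + gradInner N (un n) v) atTop
      (𝓝 (l2Pair N u v + gradInner N u v))

/-- the scalar function `h(t) = a₁t² + a₂t^{2θ} - a₃t^{p₁} - a₄t^{q₁}` of Lemma 4.2. -/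
def hfun (θ a1 a2 a3 a4 p1 q1 : ℝ) (t : ℝ) : ℝ :=
  a1 * t ^ (2 : ℝ) + a2 * t ^ (2 * θ) - a3 * t ^ p1 - a4 * t ^ q1

/-- the constant `t₁` of Lemma 4.2. -/
def tOne (θ p1 q1 : ℝ) : ℝ :=
  2 * θ * (2 * θ - q1) * (2 * θ - 2) / (p1 * (p1 - q1) * (p1 - 2))

open Set
private lemma exists_big_aux (d0 d1 d2 d3 e1 e2 e3 B : ℝ)
    (hd1 : 0 ≤ d1) (hd2 : 0 ≤ d2) (hd3 : 0 < d3)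
    (he1 : 0 ≤ e1) (h12 : e1 ≤ e2) (h23 : e2 < e3) :
    ∃ t : ℝ, B < t ∧ 1 < t ∧ d0 + d1 * t ^ e1 + d2 * t ^ e2 - d3 * t ^ e3 < 0 := by
  set X := max (|d0| + d1 + d2) 1 / d3 with hX
  have hX0 : 0 ≤ X := by positivity
  set R := X ^ (e3 - e2)⁻¹ with hR
  have hR0 : 0 ≤ R := Real.rpow_nonneg hX0 _
  refine ⟨max B (max 1 R) + 1, by linarith [le_max_left B (max 1 R)], ?_, ?_⟩
  · have := le_max_left (1:ℝ) R
    have := le_max_right B (max 1 R)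
    linarith
  set t := max B (max 1 R) + 1 with hts
  have h1t : 1 < t := by
    have := le_max_left (1:ℝ) R
    have := le_max_right B (max 1 R)
    linarith
  have ht0 : 0 < t := by linarith
  have hRt : R < t := by
    have := le_max_right (1:ℝ) R
    have := le_max_right B (max 1 R)
    linarith
  have he32 : (0:ℝ) < e3 - e2 := by linarith
  have hkey : X < t ^ (e3 - e2) := by
    have h1 : R ^ (e3 - e2) = X := by
      rw [hR, ← Real.rpow_mul hX0, inv_mul_cancel₀ (ne_of_gt he32), Real.rpow_one]
    calc X = R ^ (e3 - e2) := h1.symm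
      _ < t ^ (e3 - e2) := Real.rpow_lt_rpow hR0 hRt he32
  have hmax : |d0| + d1 + d2 ≤ X * d3 := by
    rw [hX, div_mul_cancel₀ _ (ne_of_gt hd3)]
    exact le_max_left _ _
  have hte2 : (1:ℝ) ≤ t ^ e2 := by
    have := Real.rpow_le_rpow_of_exponent_le h1t.le (le_trans he1 h12 : (0:ℝ) ≤ e2)
    rwa [Real.rpow_zero] at this
  have hte1 : t ^ e1 ≤ t ^ e2 := Real.rpow_le_rpow_of_exponent_le h1t.le h12
  have hte3 : t ^ e3 = t ^ e2 * t ^ (e3 - e2) := by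
    rw [← Real.rpow_add ht0]; ring_nf
  have hd0 : d0 ≤ |d0| := le_abs_self d0
  have htpos1 : (0:ℝ) < t ^ e1 := Real.rpow_pos_of_pos ht0 _
  have htpos2 : (0:ℝ) < t ^ e2 := Real.rpow_pos_of_pos ht0 _
  -- d0 + d1 t^e1 + d2 t^e2 ≤ (|d0| + d1 + d2) t^e2 ≤ X d3 t^e2 < d3 t^e2 t^{e3-e2} = d3 t^e3
  have step1 : d0 + d1 * t ^ e1 + d2 * t ^ e2 ≤ (|d0| + d1 + d2) * t ^ e2 := by
    have e1' : d1 * t ^ e1 ≤ d1 * t ^ e2 := mul_le_mul_of_nonneg_left hte1 hd1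
    have e2' : |d0| * 1 ≤ |d0| * t ^ e2 := mul_le_mul_of_nonneg_left hte2 (abs_nonneg d0)
    nlinarith
  have step2 : (|d0| + d1 + d2) * t ^ e2 ≤ X * d3 * t ^ e2 :=
    mul_le_mul_of_nonneg_right hmax htpos2.le
  have step3 : X * d3 * t ^ e2 < d3 * t ^ e3 := by
    rw [hte3]
    have := mul_lt_mul_of_pos_left hkey (mul_pos hd3 htpos2)
    nlinarith
  linarith

private lemma exists_small_aux (d1 d2 k e1 e2 : ℝ)
    (hd1 : 0 ≤ d1) (hd2 : 0 ≤ d2) (hk : 0 < k) (he1 : 0 < e1) (h12 : e1 ≤ e2) :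
    ∃ ε : ℝ, 0 < ε ∧ ∀ t : ℝ, 0 < t → t ≤ ε → d1 * t ^ e1 + d2 * t ^ e2 < k := by
  set Y := (k / (d1 + d2 + 1)) ^ e1⁻¹ with hY
  have hY0 : 0 < Y := Real.rpow_pos_of_pos (by positivity) _
  refine ⟨min 1 Y, by positivity, fun t ht htle => ?_⟩
  have ht1 : t ≤ 1 := le_trans htle (min_le_left _ _)
  have htY : t ≤ Y := le_trans htle (min_le_right _ _)
  have h2 : t ^ e2 ≤ t ^ e1 := Real.rpow_le_rpow_of_exponent_ge ht ht1 h12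
  have h3 : t ^ e1 ≤ k / (d1 + d2 + 1) := by
    have := Real.rpow_le_rpow ht.le htY he1.le
    rwa [hY, ← Real.rpow_mul (by positivity), inv_mul_cancel₀ (ne_of_gt he1), Real.rpow_one] at this
  have htpos1 : (0:ℝ) < t ^ e1 := Real.rpow_pos_of_pos ht _
  have hdd : (0:ℝ) < d1 + d2 + 1 := by linarith
  have h4 : (d1 + d2) * t ^ e1 ≤ (d1 + d2) * (k / (d1 + d2 + 1)) :=
    mul_le_mul_of_nonneg_left h3 (by linarith)
  have h5 : (d1 + d2) * (k / (d1 + d2 + 1)) < k := by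
    rw [← mul_div_assoc, div_lt_iff₀ hdd]
    nlinarith
  nlinarith [mul_le_mul_of_nonneg_left h2 hd2]

private lemma shape_aux
    (θ a1 a2 a3 a4 p1 q1 : ℝ)
    (hθ : 1 < θ)
    (ha1 : 0 < a1) (ha2 : 0 < a2) (ha3 : 0 < a3) (ha4 : 0 < a4)
    (hp1 : 2 * θ < p1) (hq1 : 0 < q1) (hq2 : q1 < 2)
    (T : ℝ) (hT : 0 < T) (hhT : 0 < hfun θ a1 a2 a3 a4 p1 q1 T) :
    (∃ tM ∈ Set.Ici (0 : ℝ), 0 < hfun θ a1 a2 a3 a4 p1 q1 tM ∧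
      ∀ t ∈ Set.Ici (0 : ℝ), t ≠ tM →
        hfun θ a1 a2 a3 a4 p1 q1 t < hfun θ a1 a2 a3 a4 p1 q1 tM) ∧
    (∃ tm ∈ Set.Ici (0 : ℝ), hfun θ a1 a2 a3 a4 p1 q1 tm < 0 ∧
      ∃ ε > (0 : ℝ), ∀ t ∈ Set.Ici (0 : ℝ), t ≠ tm → |t - tm| < ε →
        hfun θ a1 a2 a3 a4 p1 q1 tm < hfun θ a1 a2 a3 a4 p1 q1 t) := by
  have hθ2 : (2:ℝ) < 2 * θ := by linarith
  have hp2 : (2:ℝ) < p1 := by linarith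
  set h : ℝ → ℝ := hfun θ a1 a2 a3 a4 p1 q1 with hh
  set φ : ℝ → ℝ := fun t => 2 * a1 * t ^ (2 - q1) + 2 * θ * a2 * t ^ (2 * θ - q1)
      - p1 * a3 * t ^ (p1 - q1) - q1 * a4 with hφ
  set ψ : ℝ → ℝ := fun t => 2 * a1 * (2 - q1) + 2 * θ * a2 * (2 * θ - q1) * t ^ (2 * θ - 2)
      - p1 * a3 * (p1 - q1) * t ^ (p1 - 2) with hψ
  -- derivative of h
  have hDh : ∀ t : ℝ, 0 < t → HasDerivAt h (t ^ (q1 - 1) * φ t) t := by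
    intro t ht
    have H1 : HasDerivAt (fun s : ℝ => s ^ (2:ℝ)) (2 * t ^ ((2:ℝ) - 1)) t :=
      Real.hasDerivAt_rpow_const (Or.inl ht.ne')
    have H2 : HasDerivAt (fun s : ℝ => s ^ (2*θ)) ((2*θ) * t ^ (2*θ - 1)) t :=
      Real.hasDerivAt_rpow_const (Or.inl ht.ne')
    have H3 : HasDerivAt (fun s : ℝ => s ^ p1) (p1 * t ^ (p1 - 1)) t :=
      Real.hasDerivAt_rpow_const (Or.inl ht.ne')
    have H4 : HasDerivAt (fun s : ℝ => s ^ q1) (q1 * t ^ (q1 - 1)) t :=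
      Real.hasDerivAt_rpow_const (Or.inl ht.ne')
    have H := (((H1.const_mul a1).add (H2.const_mul a2)).sub (H3.const_mul a3)).sub
      (H4.const_mul a4)
    have key : ∀ e : ℝ, t ^ (q1 - 1) * t ^ (e - q1) = t ^ (e - 1) := by
      intro e
      rw [← Real.rpow_add ht]; ring_nf
    refine H.congr_deriv (Eq.symm ?_)
    simp only [hφ]
    linear_combination (2*a1) * key 2 + (2*θ*a2) * key (2*θ) - (p1*a3) * key p1
  -- derivative of φ
  have hDφ : ∀ t : ℝ, 0 < t → HasDerivAt φ (t ^ (1 - q1) * ψ t) t := by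
    intro t ht
    have H1 : HasDerivAt (fun s : ℝ => s ^ (2 - q1)) ((2 - q1) * t ^ (2 - q1 - 1)) t :=
      Real.hasDerivAt_rpow_const (Or.inl ht.ne')
    have H2 : HasDerivAt (fun s : ℝ => s ^ (2*θ - q1)) ((2*θ - q1) * t ^ (2*θ - q1 - 1)) t :=
      Real.hasDerivAt_rpow_const (Or.inl ht.ne')
    have H3 : HasDerivAt (fun s : ℝ => s ^ (p1 - q1)) ((p1 - q1) * t ^ (p1 - q1 - 1)) t :=
      Real.hasDerivAt_rpow_const (Or.inl ht.ne')
    have H := ((((H1.const_mul (2*a1)).add (H2.const_mul (2*θ*a2))).sub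
      (H3.const_mul (p1*a3))).sub_const (q1*a4))
    have key : ∀ e : ℝ, t ^ (1 - q1) * t ^ (e - 2) = t ^ (e - q1 - 1) := by
      intro e
      rw [← Real.rpow_add ht]; ring_nf
    have k1 : t ^ (2 - q1 - 1) = t ^ (1 - q1) := by
      rw [show (2 - q1 - 1 : ℝ) = 1 - q1 by ring]
    refine H.congr_deriv (Eq.symm ?_)
    simp only [hψ]
    linear_combination (2*θ*a2*(2*θ-q1)) * key (2*θ) - (p1*a3*(p1-q1)) * key p1
      - (2*a1*(2-q1)) * k1
  -- continuity
  have hcont : ContinuousOn h (Set.Ici (0:ℝ)) := by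
    have c : ∀ e : ℝ, 0 ≤ e → ContinuousOn (fun t : ℝ => t ^ e) (Set.Ici (0:ℝ)) := by
      intro e he
      exact continuousOn_id.rpow_const (fun x _ => Or.inr he)
    rw [hh]
    unfold hfun
    exact (((continuousOn_const.mul (c 2 (by norm_num))).add
      (continuousOn_const.mul (c (2*θ) (by linarith)))).sub
      (continuousOn_const.mul (c p1 (by linarith)))).sub
      (continuousOn_const.mul (c q1 hq1.le))
  have hφcont : ContinuousOn φ (Set.Ici (0:ℝ)) := by
    have c : ∀ e : ℝ, 0 ≤ e → ContinuousOn (fun t : ℝ => t ^ e) (Set.Ici (0:ℝ)) := by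
      intro e he
      exact continuousOn_id.rpow_const (fun x _ => Or.inr he)
    rw [hφ]
    exact (((continuousOn_const.mul (c (2-q1) (by linarith))).add
      (continuousOn_const.mul (c (2*θ-q1) (by linarith)))).sub
      (continuousOn_const.mul (c (p1-q1) (by linarith)))).sub continuousOn_const
  -- step lemma for ψ
  have hψstep : ∀ t0 t : ℝ, 0 < t0 → t0 < t → ψ t0 ≤ 0 → ψ t < 0 := by
    intro t0 t ht0 htt hψ0
    have ht : 0 < t := lt_trans ht0 htt
    set r : ℝ := t / t0 with hr
    have hr1 : 1 < r := (one_lt_div ht0).2 htt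
    have e1 : t ^ (2*θ - 2) = t0 ^ (2*θ - 2) * r ^ (2*θ - 2) := by
      rw [hr, ← Real.mul_rpow ht0.le (by positivity), mul_div_cancel₀ _ (ne_of_gt ht0)]
    have e2 : t ^ (p1 - 2) = t0 ^ (p1 - 2) * r ^ (p1 - 2) := by
      rw [hr, ← Real.mul_rpow ht0.le (by positivity), mul_div_cancel₀ _ (ne_of_gt ht0)]
    have hr2 : (1:ℝ) < r ^ (p1 - 2) := by
      have := Real.rpow_lt_rpow_of_exponent_lt hr1 (show (0:ℝ) < p1 - 2 by linarith)
      rwa [Real.rpow_zero] at this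
    have hr3 : r ^ (2*θ - 2) ≤ r ^ (p1 - 2) :=
      Real.rpow_le_rpow_of_exponent_le hr1.le (by linarith)
    have ht0p : (0:ℝ) < t0 ^ (2*θ - 2) := Real.rpow_pos_of_pos ht0 _
    have hrp : (0:ℝ) < r ^ (2*θ - 2) := Real.rpow_pos_of_pos (div_pos ht ht0) _
    simp only [hψ] at hψ0 ⊢
    rw [e1, e2]
    have hA : (0:ℝ) < 2*a1*(2-q1) := by
      apply mul_pos (by linarith) (by linarith)
    have hB : (0:ℝ) < 2*θ*a2*(2*θ-q1) :=
      mul_pos (mul_pos (by linarith) ha2) (by linarith)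
    nlinarith [mul_lt_mul_of_pos_left hr2 hA,
      mul_le_mul_of_nonneg_left hr3 (mul_nonneg hB.le ht0p.le),
      mul_le_mul_of_nonneg_right hψ0 (le_of_lt (lt_trans one_pos hr2))]
  -- ψ is positive for small t
  obtain ⟨εψ, hεψ, hψsmall⟩ : ∃ ε : ℝ, 0 < ε ∧ ∀ t : ℝ, 0 < t → t ≤ ε → 0 < ψ t := by
    obtain ⟨ε, hε, hsm⟩ := exists_small_aux (p1*a3*(p1-q1)) 0 (2*a1*(2-q1)) (p1-2) (p1-2)
      (mul_pos (mul_pos (by linarith : (0:ℝ) < p1) ha3) (by linarith)).le le_rfl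
      (mul_pos (by linarith : (0:ℝ) < 2*a1) (by linarith)) (by linarith) le_rfl
    refine ⟨ε, hε, fun t ht htle => ?_⟩
    have := hsm t ht htle
    have h2 : (0:ℝ) ≤ 2*θ*a2*(2*θ-q1) * t ^ (2*θ-2) := by
      have ht' := Real.rpow_pos_of_pos ht (2*θ-2)
      have hB : (0:ℝ) < 2*θ*a2*(2*θ-q1) := mul_pos (mul_pos (by linarith) ha2) (by linarith)
      exact (mul_pos hB ht').le
    simp only [hψ]
    nlinarith
  -- ψ is negative for some large t
  obtain ⟨Tψ, hTψB, hTψ1, hTψneg⟩ := exists_big_aux (2*a1*(2-q1)) (2*θ*a2*(2*θ-q1)) 0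
      (p1*a3*(p1-q1)) (2*θ-2) (2*θ-2) (p1-2) 0
      (mul_pos (mul_pos (by linarith : (0:ℝ) < 2*θ) ha2) (by linarith : (0:ℝ) < 2*θ-q1)).le le_rfl
      (mul_pos (mul_pos (by linarith : (0:ℝ) < p1) ha3) (by linarith)) (by linarith) le_rfl
      (by linarith)
  have hTψneg' : ψ Tψ < 0 := by simp only [hψ]; nlinarith
  -- the sign-change point of ψ
  set S : Set ℝ := {t : ℝ | 0 < t ∧ ψ t ≤ 0} with hS
  have hSne : S.Nonempty := ⟨Tψ, by positivity, hTψneg'.le⟩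
  have hSlb : ∀ t ∈ S, εψ ≤ t := by
    intro t htS
    by_contra hcon
    push_neg at hcon
    exact absurd (hψsmall t htS.1 hcon.le) (not_lt.2 htS.2)
  set σ : ℝ := sInf S with hσ
  have hσpos : 0 < σ := lt_of_lt_of_le hεψ (le_csInf hSne hSlb)
  have hψpos : ∀ t : ℝ, 0 < t → t < σ → 0 < ψ t := by
    intro t ht htσ
    by_contra hcon
    push_neg at hcon
    exact absurd (csInf_le ⟨εψ, hSlb⟩ (⟨ht, hcon⟩ : t ∈ S)) (not_le.2 htσ)
  have hψneg : ∀ t : ℝ, σ < t → ψ t < 0 := by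
    intro t htσ
    obtain ⟨t0, ht0S, ht0lt⟩ := exists_lt_of_csInf_lt hSne htσ
    exact hψstep t0 t ht0S.1 ht0lt ht0S.2
  -- φ is strictly monotone then strictly antitone
  have hφmono : StrictMonoOn φ (Set.Ioc 0 σ) := by
    apply strictMonoOn_of_deriv_pos (convex_Ioc 0 σ)
      (hφcont.mono (fun x hx => le_of_lt hx.1))
    intro x hx
    rw [interior_Ioc] at hx
    rw [(hDφ x hx.1).deriv]
    exact mul_pos (Real.rpow_pos_of_pos hx.1 _) (hψpos x hx.1 hx.2)
  have hφanti : StrictAntiOn φ (Set.Ici σ) := by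
    apply strictAntiOn_of_deriv_neg (convex_Ici σ)
      (hφcont.mono (fun x hx => le_trans hσpos.le hx))
    intro x hx
    rw [interior_Ici] at hx
    rw [(hDφ x (lt_trans hσpos hx)).deriv]
    exact mul_neg_of_pos_of_neg (Real.rpow_pos_of_pos (lt_trans hσpos hx) _) (hψneg x hx)
  -- h 0 = 0
  have h0 : h 0 = 0 := by
    simp only [hh, hfun]
    rw [Real.zero_rpow (by norm_num : (2:ℝ) ≠ 0), Real.zero_rpow (by positivity : (2*θ) ≠ 0),
      Real.zero_rpow (by positivity : p1 ≠ 0), Real.zero_rpow (ne_of_gt hq1)]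
    ring
  -- MVT gives a point where φ > 0
  have hφposc : ∃ c : ℝ, 0 < c ∧ 0 < φ c := by
    obtain ⟨c, hcmem, hcslope⟩ := exists_deriv_eq_slope h hT
      (hcont.mono (fun x hx => hx.1)) (fun x hx => (hDh x hx.1).differentiableAt.differentiableWithinAt)
    refine ⟨c, hcmem.1, ?_⟩
    rw [(hDh c hcmem.1).deriv] at hcslope
    have hs : 0 < (h T - h 0) / (T - 0) := by
      rw [h0]
      apply div_pos (by linarith) (by linarith)
    rw [← hcslope] at hs
    nlinarith [Real.rpow_pos_of_pos hcmem.1 (q1 - 1), hs]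
  obtain ⟨c, hc0, hφc⟩ := hφposc
  -- φ σ > 0
  have hφσ : 0 < φ σ := by
    rcases le_or_gt c σ with hcσ | hcσ
    · rcases eq_or_lt_of_le hcσ with rfl | hlt
      · exact hφc
      · exact lt_trans hφc (hφmono ⟨hc0, hcσ⟩ ⟨hσpos, le_refl σ⟩ hlt)
    · exact lt_trans hφc (hφanti (self_mem_Ici) (Set.mem_Ici.2 hcσ.le) hcσ)
  -- φ is negative for small t
  obtain ⟨εφ, hεφ, hφsmall⟩ : ∃ ε : ℝ, 0 < ε ∧ ∀ t : ℝ, 0 < t → t ≤ ε → φ t < 0 := by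
    obtain ⟨ε, hε, hsm⟩ := exists_small_aux (2*a1) (2*θ*a2) (q1*a4) (2-q1) (2*θ-q1)
      (by linarith) (mul_pos (by linarith : (0:ℝ) < 2*θ) ha2).le
      (mul_pos hq1 ha4) (by linarith) (by linarith)
    refine ⟨ε, hε, fun t ht htle => ?_⟩
    have := hsm t ht htle
    have h2 : (0:ℝ) < p1*a3 * t ^ (p1-q1) :=
      mul_pos (mul_pos (by linarith) ha3) (Real.rpow_pos_of_pos ht (p1-q1))
    simp only [hφ]
    nlinarith
  -- first zero s1 of φ
  obtain ⟨s1, hs1mem, hs1zero⟩ : ∃ s1 ∈ Set.Ioo (min εφ σ) σ, φ s1 = 0 := by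
    have hts : 0 < min εφ σ := lt_min hεφ hσpos
    have h1 : φ (min εφ σ) < 0 := hφsmall _ hts (min_le_left _ _)
    have h2 : (0:ℝ) ∈ Set.Ioo (φ (min εφ σ)) (φ σ) := ⟨h1, hφσ⟩
    have h3 := intermediate_value_Ioo (min_le_right εφ σ)
      (hφcont.mono (fun x hx => le_trans hts.le hx.1))
    obtain ⟨s1, hs1, hval⟩ := h3 h2
    exact ⟨s1, hs1, hval⟩
  have hs1pos : 0 < s1 := lt_trans (lt_min hεφ hσpos) hs1mem.1
  have hs1σ : s1 < σ := hs1mem.2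
  -- φ is negative for some large t
  obtain ⟨Tφ, hTφσ, hTφ1, hTφneg⟩ := exists_big_aux (-(q1*a4)) (2*a1) (2*θ*a2) (p1*a3)
      (2-q1) (2*θ-q1) (p1-q1) σ (by linarith) (mul_pos (by linarith : (0:ℝ) < 2*θ) ha2).le
      (mul_pos (by linarith : (0:ℝ) < p1) ha3) (by linarith) (by linarith) (by linarith)
  have hTφneg' : φ Tφ < 0 := by simp only [hφ]; linarith
  -- second zero s2 of φ
  obtain ⟨s2, hs2mem, hs2zero⟩ : ∃ s2 ∈ Set.Ioo σ Tφ, φ s2 = 0 := by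
    have h2 : (0:ℝ) ∈ Set.Ioo (φ Tφ) (φ σ) := ⟨hTφneg', hφσ⟩
    have h3 := intermediate_value_Ioo' (le_of_lt hTφσ)
      (hφcont.mono (fun x hx => le_trans hσpos.le hx.1))
    obtain ⟨s2, hs2, hval⟩ := h3 h2
    exact ⟨s2, hs2, hval⟩
  have hs1σ2 : s1 < s2 := lt_trans hs1σ hs2mem.1
  have hs2pos : 0 < s2 := lt_trans hσpos hs2mem.1
  -- sign of φ on the three regions
  have hφneg1 : ∀ t : ℝ, 0 < t → t < s1 → φ t < 0 := by
    intro t ht hts1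
    have := hφmono (⟨ht, le_of_lt (lt_trans hts1 hs1σ)⟩ : t ∈ Set.Ioc 0 σ)
      ⟨hs1pos, hs1σ.le⟩ hts1
    rw [hs1zero] at this
    exact this
  have hφpos12 : ∀ t : ℝ, s1 < t → t < s2 → 0 < φ t := by
    intro t hs1t hts2
    rcases le_or_gt t σ with htσ | htσ
    · have := hφmono ⟨hs1pos, hs1σ.le⟩ (⟨lt_trans hs1pos hs1t, htσ⟩ : t ∈ Set.Ioc 0 σ) hs1t
      rw [hs1zero] at this
      exact this
    · have := hφanti (Set.mem_Ici.2 htσ.le) (Set.mem_Ici.2 hs2mem.1.le) hts2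
      rw [hs2zero] at this
      exact this
  have hφneg2 : ∀ t : ℝ, s2 < t → φ t < 0 := by
    intro t hts
    have := hφanti (Set.mem_Ici.2 hs2mem.1.le)
      (Set.mem_Ici.2 (le_of_lt (lt_trans hs2mem.1 hts))) hts
    rw [hs2zero] at this
    exact this
  -- monotonicity of h
  have hanti1 : StrictAntiOn h (Set.Icc 0 s1) := by
    apply strictAntiOn_of_deriv_neg (convex_Icc 0 s1) (hcont.mono (fun x hx => hx.1))
    intro x hx
    rw [interior_Icc] at hx
    rw [(hDh x hx.1).deriv]
    exact mul_neg_of_pos_of_neg (Real.rpow_pos_of_pos hx.1 _) (hφneg1 x hx.1 hx.2)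
  have hmono : StrictMonoOn h (Set.Icc s1 s2) := by
    apply strictMonoOn_of_deriv_pos (convex_Icc s1 s2)
      (hcont.mono (fun x hx => le_trans hs1pos.le hx.1))
    intro x hx
    rw [interior_Icc] at hx
    rw [(hDh x (lt_trans hs1pos hx.1)).deriv]
    exact mul_pos (Real.rpow_pos_of_pos (lt_trans hs1pos hx.1) _) (hφpos12 x hx.1 hx.2)
  have hanti2 : StrictAntiOn h (Set.Ici s2) := by
    apply strictAntiOn_of_deriv_neg (convex_Ici s2)
      (hcont.mono (fun x hx => le_trans hs2pos.le hx))
    intro x hx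
    rw [interior_Ici] at hx
    rw [(hDh x (lt_trans hs2pos hx)).deriv]
    exact mul_neg_of_pos_of_neg (Real.rpow_pos_of_pos (lt_trans hs2pos hx) _) (hφneg2 x hx)
  -- h s1 < 0
  have hs1neg : h s1 < 0 := by
    have := hanti1 (Set.mem_Icc.2 ⟨le_refl 0, hs1pos.le⟩)
      (Set.mem_Icc.2 ⟨hs1pos.le, le_refl s1⟩) hs1pos
    rw [h0] at this
    exact this
  -- s1 < T
  have hTs1 : s1 < T := by
    by_contra hcon
    push_neg at hcon
    have := hanti1 (Set.mem_Icc.2 ⟨le_refl 0, by linarith⟩)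
      (Set.mem_Icc.2 ⟨hT.le, hcon⟩) hT
    rw [h0] at this
    linarith
  -- 0 < h s2
  have hs2val : 0 < h s2 := by
    rcases le_or_gt T s2 with hTs2 | hTs2
    · have := hmono.monotoneOn (Set.mem_Icc.2 ⟨hTs1.le, hTs2⟩)
        (Set.mem_Icc.2 ⟨hs1σ2.le, le_refl s2⟩) hTs2
      linarith
    · have := hanti2 Set.self_mem_Ici (Set.mem_Ici.2 hTs2.le) hTs2
      linarith
  constructor
  · refine ⟨s2, Set.mem_Ici.2 hs2pos.le, hs2val, ?_⟩
    intro t htmem htne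
    rcases lt_trichotomy t s2 with hlt | heq | hgt
    · rcases le_or_gt t s1 with hts1 | hts1
      · have h1 : h t ≤ h 0 := hanti1.antitoneOn
          (Set.mem_Icc.2 ⟨le_refl 0, hs1pos.le⟩)
          (Set.mem_Icc.2 ⟨Set.mem_Ici.1 htmem, hts1⟩) (Set.mem_Ici.1 htmem)
        rw [h0] at h1
        linarith
      · exact hmono (Set.mem_Icc.2 ⟨hts1.le, hlt.le⟩)
          (Set.mem_Icc.2 ⟨hs1σ2.le, le_refl s2⟩) hlt
    · exact absurd heq htne
    · exact hanti2 Set.self_mem_Ici (Set.mem_Ici.2 hgt.le) hgt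
  · refine ⟨s1, Set.mem_Ici.2 hs1pos.le, hs1neg, s2 - s1, by linarith, ?_⟩
    intro t htmem htne habs
    rcases lt_or_gt_of_ne htne with hlt | hgt
    · exact hanti1 (Set.mem_Icc.2 ⟨Set.mem_Ici.1 htmem, hlt.le⟩)
        (Set.mem_Icc.2 ⟨hs1pos.le, le_refl s1⟩) hlt
    · have hts2 : t < s2 := by
        have := abs_lt.1 habs
        linarith [this.2]
      exact hmono (Set.mem_Icc.2 ⟨le_refl s1, hs1σ2.le⟩)
        (Set.mem_Icc.2 ⟨hgt.le, hts2.le⟩) hgt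


set_option maxHeartbeats 1000000 in
/-- **Lemma 4.2** (Statement 11): under condition (4.1), `h` has a global strict
maximum at a positive level and a local strict minimum at a negative level on `[0,∞)`. -/
theorem statement11
    (θ a1 a2 a3 a4 p1 q1 : ℝ)
    (hθ : 1 < θ)
    (ha1 : 0 < a1) (ha2 : 0 < a2) (ha3 : 0 < a3) (ha4 : 0 < a4)
    (hp1 : 2 * θ < p1) (hq1 : 0 < q1) (hq2 : q1 < 2)
    (hineq :
      (tOne θ p1 q1 ^ ((2 * θ - q1) / (p1 - 2 * θ)) -
        tOne θ p1 q1 ^ ((p1 - q1) / (p1 - 2 * θ))) *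
      (a1 / a4 * (a2 / a3) ^ ((2 - q1) / (p1 - 2 * θ)) +
        1 / a4 * (a2 ^ ((p1 - q1) / (p1 - 2 * θ)) / a3 ^ ((2 * θ - q1) / (p1 - 2 * θ)))) > 1) :
    (∃ tM ∈ Set.Ici (0 : ℝ), 0 < hfun θ a1 a2 a3 a4 p1 q1 tM ∧
      ∀ t ∈ Set.Ici (0 : ℝ), t ≠ tM →
        hfun θ a1 a2 a3 a4 p1 q1 t < hfun θ a1 a2 a3 a4 p1 q1 tM) ∧
    (∃ tm ∈ Set.Ici (0 : ℝ), hfun θ a1 a2 a3 a4 p1 q1 tm < 0 ∧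
      ∃ ε > (0 : ℝ), ∀ t ∈ Set.Ici (0 : ℝ), t ≠ tm → |t - tm| < ε →
        hfun θ a1 a2 a3 a4 p1 q1 tm < hfun θ a1 a2 a3 a4 p1 q1 t) := by
  have hθ2 : (2:ℝ) < 2*θ := by linarith
  have hp2 : (2:ℝ) < p1 := by linarith
  set s : ℝ := p1 - 2*θ with hs
  have hspos : 0 < s := by rw [hs]; linarith
  set t1 : ℝ := tOne θ p1 q1 with ht1
  have ht1pos : 0 < t1 := by
    rw [ht1]; unfold tOne
    apply div_pos
    · exact mul_pos (mul_pos (by linarith) (by linarith)) (by linarith)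
    · exact mul_pos (mul_pos (by linarith) (by linarith)) (by linarith)
  have ht1lt : t1 < 1 := by
    rw [ht1]; unfold tOne
    rw [div_lt_one (mul_pos (mul_pos (by linarith : (0:ℝ) < p1)
      (by linarith : (0:ℝ) < p1 - q1)) (by linarith : (0:ℝ) < p1 - 2))]
    have h1 : 2*θ*(2*θ - q1) < p1*(p1 - q1) := by nlinarith
    have h2 : (0:ℝ) < p1*(p1 - q1) := mul_pos (by linarith) (by linarith)
    nlinarith [mul_lt_mul_of_pos_right h1 (show (0:ℝ) < 2*θ - 2 by linarith),
      mul_lt_mul_of_pos_left (show (2*θ - 2:ℝ) < p1 - 2 by linarith) h2]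
  set X : ℝ := t1 * (a2 / a3) with hX
  have hXpos : 0 < X := mul_pos ht1pos (div_pos ha2 ha3)
  set T : ℝ := X ^ s⁻¹ with hT
  have hTpos : 0 < T := Real.rpow_pos_of_pos hXpos _
  have hTe : ∀ e : ℝ, T ^ e = X ^ (e / s) := by
    intro e
    rw [hT, ← Real.rpow_mul hXpos.le]
    congr 1
    field_simp
  have hTs : T ^ s = X := by
    rw [hTe, div_self (ne_of_gt hspos), Real.rpow_one]
  -- shorthand positivities
  have hX1pos : 0 < (a2/a3) ^ ((2 - q1)/s) := Real.rpow_pos_of_pos (div_pos ha2 ha3) _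
  have hX2pos : 0 < a2 ^ ((p1 - q1)/s) / a3 ^ ((2*θ - q1)/s) :=
    div_pos (Real.rpow_pos_of_pos ha2 _) (Real.rpow_pos_of_pos ha3 _)
  have ht1e2pos : 0 < t1 ^ ((2*θ - q1)/s) := Real.rpow_pos_of_pos ht1pos _
  have ht1e0pos : 0 < t1 ^ ((2 - q1)/s) := Real.rpow_pos_of_pos ht1pos _
  have F1 : t1 ^ ((p1 - q1)/s) = t1 ^ ((2*θ - q1)/s) * t1 := by
    rw [show (p1 - q1)/s = (2*θ - q1)/s + 1 by field_simp; rw [hs]; ring]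
    rw [Real.rpow_add ht1pos, Real.rpow_one]
  have F2 : t1 ^ ((2*θ - q1)/s) ≤ t1 ^ ((2 - q1)/s) :=
    Real.rpow_le_rpow_of_exponent_ge ht1pos ht1lt.le
      ((div_le_div_iff_of_pos_right hspos).2 (by linarith))
  -- the key inequality
  have key : a4 < a1 * (t1 ^ ((2 - q1)/s) * (a2/a3) ^ ((2 - q1)/s)) +
      (1 - t1) * t1 ^ ((2*θ - q1)/s) * (a2 ^ ((p1 - q1)/s) / a3 ^ ((2*θ - q1)/s)) := by
    rw [F1] at hineq
    have h1 := mul_lt_mul_of_pos_left hineq ha4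
    have h2 : a4 * ((t1 ^ ((2*θ - q1)/s) - t1 ^ ((2*θ - q1)/s) * t1) *
        (a1 / a4 * (a2/a3) ^ ((2 - q1)/s) +
          1 / a4 * (a2 ^ ((p1 - q1)/s) / a3 ^ ((2*θ - q1)/s)))) =
        (t1 ^ ((2*θ - q1)/s) * (1 - t1)) *
        (a1 * (a2/a3) ^ ((2 - q1)/s) + (a2 ^ ((p1 - q1)/s) / a3 ^ ((2*θ - q1)/s))) := by
      field_simp
    rw [h2, mul_one] at h1
    have h1t1 : (0:ℝ) ≤ 1 - t1 := by linarith
    have hint1 : a1 * (1 - t1) * t1 ^ ((2*θ - q1)/s) * (a2/a3) ^ ((2 - q1)/s) ≤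
        a1 * (1 - t1) * t1 ^ ((2 - q1)/s) * (a2/a3) ^ ((2 - q1)/s) :=
      mul_le_mul_of_nonneg_right
        (mul_le_mul_of_nonneg_left F2 (mul_nonneg ha1.le h1t1)) hX1pos.le
    have hint2 : (0:ℝ) ≤ a1 * t1 * (t1 ^ ((2 - q1)/s) * (a2/a3) ^ ((2 - q1)/s)) :=
      mul_nonneg (mul_nonneg ha1.le ht1pos.le) (mul_nonneg ht1e0pos.le hX1pos.le)
    nlinarith [h1, hint1, hint2]
  -- translate to powers of T
  have hTe0 : T ^ (2 - q1) = t1 ^ ((2 - q1)/s) * (a2/a3) ^ ((2 - q1)/s) := by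
    rw [hTe, hX, Real.mul_rpow ht1pos.le (div_pos ha2 ha3).le]
  have haux : a2 ^ ((p1 - q1)/s) = a2 * a2 ^ ((2*θ - q1)/s) := by
    rw [show (p1 - q1)/s = 1 + (2*θ - q1)/s by field_simp; rw [hs]; ring]
    rw [Real.rpow_add ha2, Real.rpow_one]
  have hTe2 : a2 * T ^ (2*θ - q1) =
      t1 ^ ((2*θ - q1)/s) * (a2 ^ ((p1 - q1)/s) / a3 ^ ((2*θ - q1)/s)) := by
    rw [hTe, hX, Real.mul_rpow ht1pos.le (div_pos ha2 ha3).le,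
      Real.div_rpow ha2.le ha3.le, haux]
    ring
  have hRp : a3 * T ^ (p1 - q1) = t1 * (a2 * T ^ (2*θ - q1)) := by
    have h1 : T ^ (p1 - q1) = T ^ (2*θ - q1) * T ^ s := by
      rw [← Real.rpow_add hTpos]
      congr 1
      rw [hs]; ring
    rw [h1, hTs, hX]
    field_simp
  have hbr : a4 < a1 * T ^ (2 - q1) + a2 * T ^ (2*θ - q1) - a3 * T ^ (p1 - q1) := by
    have hb2 : a2 * T ^ (2*θ - q1) - a3 * T ^ (p1 - q1) =
        (1 - t1) * t1 ^ ((2*θ - q1)/s) *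
          (a2 ^ ((p1 - q1)/s) / a3 ^ ((2*θ - q1)/s)) := by
      rw [hRp, hTe2]
      ring
    rw [hTe0]
    linarith [key, hb2]
  -- conclude hfun T > 0
  have hmain : 0 < hfun θ a1 a2 a3 a4 p1 q1 T := by
    have hTq1 : 0 < T ^ q1 := Real.rpow_pos_of_pos hTpos _
    have h1 := mul_lt_mul_of_pos_left hbr hTq1
    have key2 : ∀ e : ℝ, T ^ q1 * T ^ (e - q1) = T ^ e := by
      intro e
      rw [← Real.rpow_add hTpos]
      ring_nf
    unfold hfun
    nlinarith [h1, key2 2, key2 (2*θ), key2 p1]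
  exact shape_aux θ a1 a2 a3 a4 p1 q1 hθ ha1 ha2 ha3 ha4 hp1 hq1 hq2 T hTpos hmain
end
end

section
/- Let 2_{μ,*} < q < A*, B* < p ≤ 2*_μ, and 0 < α < α₂. Then the function g(t) = (a/2)t² + (b/(2θ))t^{2θ} − (α/(2q))C_q c^{2q(1−δ_q)} t^{2qδ_q} − (1/(2p))C_p c^{2p(1−δ_p)} t^{2pδ_p} on [0,∞) has a global strict maximum at a positive level and a local strict minimum at a negative level; moreover there exist 0 < t₀ < t₁ (depending on c and α) such that g(t₀) = g(t₁) = 0 and g(t) > 0 if and only if t ∈ (t₀, t₁). -/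
/- Common framework for normalized solutions of Kirchhoff-Choquard equations
   (Goel-Gupta, "Normalized Solutions to the Kirchhoff-Choquard Equations with
   Combined Growth"). Functions are modelled as `u : EuclideanSpace ℝ (Fin N) → ℝ`. -/

open MeasureTheory Real Filter Topology RealInnerProductSpace

noncomputable section

namespace Statement12Aux
open Set


lemma myCont {e : ℝ} (he : 0 < e) : Continuous fun t : ℝ => t ^ e := by
  rw [continuous_iff_continuousAt]
  intro x
  rcases eq_or_ne x 0 with h | h
  · exact Real.continuousAt_rpow_const x e (Or.inr he.le)
  · exact Real.continuousAt_rpow_const x e (Or.inl h)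

/-- generic "eventually the big power wins" lemma -/
lemma big_neg (d1 d2 d4 i1 i2 i4 : ℝ) (hd1 : 0 ≤ d1) (hd2 : 0 ≤ d2) (hd4 : 0 < d4)
    (h12 : i1 ≤ i2) (h24 : i2 < i4) (w0 : ℝ) :
    ∃ W, w0 ≤ W ∧ 0 < W ∧ d1 * W ^ i1 + d2 * W ^ i2 < d4 * W ^ i4 := by
  set V : ℝ := (d1 + d2) / d4 + 1 with hV
  have hV0 : 0 < V := by positivity
  set R : ℝ := V ^ (1 / (i4 - i2)) with hR
  have hR0 : 0 < R := Real.rpow_pos_of_pos hV0 _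
  refine ⟨max w0 (max 1 R), le_max_left _ _, ?_, ?_⟩
  · have : (1:ℝ) ≤ max 1 R := le_max_left _ _
    have := le_max_right w0 (max 1 R); linarith
  set W := max w0 (max 1 R) with hW
  have hW1 : (1:ℝ) ≤ W := le_trans (le_max_left 1 R) (le_max_right _ _)
  have hWR : R ≤ W := le_trans (le_max_right 1 R) (le_max_right _ _)
  have hW0 : (0:ℝ) < W := by linarith
  have hRV : R ^ (i4 - i2) = V := by
    rw [hR, ← Real.rpow_mul hV0.le, one_div, inv_mul_cancel₀ (by linarith : i4 - i2 ≠ 0),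
      Real.rpow_one]
  have hWV : V ≤ W ^ (i4 - i2) := by
    rw [← hRV]; exact Real.rpow_le_rpow hR0.le hWR (by linarith)
  have hsplit : W ^ i4 = W ^ i2 * W ^ (i4 - i2) := by
    rw [← Real.rpow_add hW0, show i2 + (i4 - i2) = i4 by ring]
  have h1 : d1 * W ^ i1 ≤ d1 * W ^ i2 :=
    mul_le_mul_of_nonneg_left (Real.rpow_le_rpow_of_exponent_le hW1 h12) hd1
  have hWi2 : 0 < W ^ i2 := Real.rpow_pos_of_pos hW0 _
  have key : (d1 + d2 + d4) * W ^ i2 ≤ d4 * W ^ i4 := by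
    rw [hsplit]
    have : d1 + d2 + d4 ≤ d4 * W ^ (i4 - i2) := by
      calc d1 + d2 + d4 = d4 * V := by rw [hV]; field_simp
        _ ≤ d4 * W ^ (i4 - i2) := mul_le_mul_of_nonneg_left hWV hd4.le
    nlinarith
  nlinarith


/-- inner shape lemma: `G t = K0 + K1 t^f1 - K2 t^f2` is positive then negative. -/
lemma shape0 (K0 K1 K2 f1 f2 : ℝ) (hK0 : 0 < K0) (hK1 : 0 < K1) (hK2 : 0 < K2)
    (hf1 : 0 < f1) (hf12 : f1 < f2) :
    ∃ r > 0, (∀ t, 0 < t → t < r → 0 < K0 + K1 * t ^ f1 - K2 * t ^ f2) ∧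
      (∀ t, r < t → K0 + K1 * t ^ f1 - K2 * t ^ f2 < 0) := by
  set G : ℝ → ℝ := fun t => K0 + K1 * t ^ f1 - K2 * t ^ f2 with hG
  have hGc : Continuous G := by
    apply Continuous.sub
    · exact continuous_const.add (continuous_const.mul (myCont hf1))
    · exact continuous_const.mul (myCont (by linarith : (0:ℝ) < f2))
  have hder : ∀ t : ℝ, 0 < t →
      HasDerivAt G (t ^ (f1 - 1) * (K1 * f1 - K2 * f2 * t ^ (f2 - f1))) t := by
    intro t ht
    have h1 : HasDerivAt (fun t : ℝ => t ^ f1) (f1 * t ^ (f1 - 1)) t :=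
      Real.hasDerivAt_rpow_const (Or.inl ht.ne')
    have h2 : HasDerivAt (fun t : ℝ => t ^ f2) (f2 * t ^ (f2 - 1)) t :=
      Real.hasDerivAt_rpow_const (Or.inl ht.ne')
    have := ((h1.const_mul K1).const_add K0).sub (h2.const_mul K2)
    refine this.congr_deriv ?_
    symm
    have e1 : t ^ (f1 - 1) * t ^ (f2 - f1) = t ^ (f2 - 1) := by
      rw [← Real.rpow_add ht, show f1 - 1 + (f2 - f1) = f2 - 1 by ring]
    linear_combination (-(K2 * f2)) * e1
  have hf2 : 0 < f2 := by linarith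
  -- the critical point of G
  set m : ℝ := (K1 * f1 / (K2 * f2)) ^ (1 / (f2 - f1)) with hm
  have hm0 : 0 < m := Real.rpow_pos_of_pos (by positivity) _
  have hmv : m ^ (f2 - f1) = K1 * f1 / (K2 * f2) := by
    rw [hm, ← Real.rpow_mul (by positivity), one_div,
      inv_mul_cancel₀ (by linarith : f2 - f1 ≠ 0), Real.rpow_one]
  have hderpos : ∀ t ∈ Ioo (0:ℝ) m, 0 < deriv G t := by
    intro t ⟨ht0, htm⟩
    rw [(hder t ht0).deriv]
    have : t ^ (f2 - f1) < K1 * f1 / (K2 * f2) := by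
      rw [← hmv]; exact Real.rpow_lt_rpow ht0.le htm (by linarith)
    have h2 : K2 * f2 * t ^ (f2 - f1) < K1 * f1 := by
      rw [lt_div_iff₀ (by positivity)] at this; nlinarith
    have := Real.rpow_pos_of_pos ht0 (f1 - 1)
    nlinarith
  have hderneg : ∀ t ∈ Ioi m, deriv G t < 0 := by
    intro t htm
    have ht0 : 0 < t := lt_trans hm0 htm
    rw [(hder t ht0).deriv]
    have : K1 * f1 / (K2 * f2) < t ^ (f2 - f1) := by
      rw [← hmv]; exact Real.rpow_lt_rpow hm0.le htm (by linarith)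
    have h2 : K1 * f1 < K2 * f2 * t ^ (f2 - f1) := by
      rw [div_lt_iff₀ (by positivity)] at this; nlinarith
    have := Real.rpow_pos_of_pos ht0 (f1 - 1)
    nlinarith
  have hmono : StrictMonoOn G (Icc 0 m) := by
    apply strictMonoOn_of_deriv_pos (convex_Icc 0 m) hGc.continuousOn
    rw [interior_Icc]; exact hderpos
  have hanti : StrictAntiOn G (Ici m) := by
    apply strictAntiOn_of_deriv_neg (convex_Ici m) hGc.continuousOn
    rw [interior_Ici]; exact hderneg
  have hG0 : G 0 = K0 := by
    simp [hG, Real.zero_rpow hf1.ne', Real.zero_rpow (by linarith : f2 ≠ 0)]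
  have hGm : 0 < G m := by
    have := hmono (left_mem_Icc.2 hm0.le) (right_mem_Icc.2 hm0.le) hm0
    rw [hG0] at this; linarith
  -- a point where G is negative
  obtain ⟨W, hWm, hW0, hWneg⟩ := big_neg K0 K1 K2 0 f1 f2 hK0.le hK1.le hK2
    hf1.le hf12 m
  have hGW : G W < 0 := by
    rw [Real.rpow_zero, mul_one] at hWneg
    simp only [hG]; linarith
  obtain ⟨r, hr, hGr⟩ : ∃ r ∈ Icc m W, G r = 0 := by
    have := intermediate_value_Icc' hWm (hGc.continuousOn (s := Icc m W))
    have h0 : (0:ℝ) ∈ Icc (G W) (G m) := ⟨hGW.le, hGm.le⟩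
    obtain ⟨r, hr, hGr⟩ := this h0
    exact ⟨r, hr, hGr⟩
  have hrm : m < r := by
    rcases lt_or_eq_of_le hr.1 with h | h
    · exact h
    · exfalso; rw [← h] at hGr; linarith
  refine ⟨r, lt_trans hm0 hrm, ?_, ?_⟩
  · intro t ht0 htr
    show 0 < G t
    rcases le_or_gt t m with h | h
    · have := hmono (left_mem_Icc.2 hm0.le) ⟨ht0.le, h⟩ ht0
      rw [hG0] at this; linarith
    · have := hanti (mem_Ici.2 h.le) (mem_Ici.2 hr.1) htr
      rw [hGr] at this; linarith
  · intro t htr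
    show G t < 0
    have := hanti (mem_Ici.2 hr.1) (mem_Ici.2 (le_trans hr.1 (le_of_lt htr))) htr
    rw [hGr] at this; linarith


/-- sign pattern of `F t = c1 t^e1 + c2 t^e2 - c3 - c4 t^e3` on `(0,∞)`:
negative, then positive, then negative, provided it is somewhere positive. -/
lemma shape (c1 c2 c3 c4 e1 e2 e3 : ℝ) (h1 : 0 < c1) (h2 : 0 < c2) (h3 : 0 < c3)
    (h4 : 0 < c4) (he1 : 0 < e1) (he12 : e1 < e2) (he23 : e2 < e3)
    (hv : ∃ v, 0 < v ∧ 0 < c1 * v ^ e1 + c2 * v ^ e2 - c3 - c4 * v ^ e3) :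
    ∃ u1 u2, 0 < u1 ∧ u1 < u2 ∧
      (∀ t, 0 < t → t < u1 → c1 * t ^ e1 + c2 * t ^ e2 - c3 - c4 * t ^ e3 < 0) ∧
      (∀ t, u1 < t → t < u2 → 0 < c1 * t ^ e1 + c2 * t ^ e2 - c3 - c4 * t ^ e3) ∧
      (∀ t, u2 < t → c1 * t ^ e1 + c2 * t ^ e2 - c3 - c4 * t ^ e3 < 0) := by
  set F : ℝ → ℝ := fun t => c1 * t ^ e1 + c2 * t ^ e2 - c3 - c4 * t ^ e3 with hF
  have he2 : 0 < e2 := by linarith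
  have he3 : 0 < e3 := by linarith
  have hFc : Continuous F := by
    exact (((continuous_const.mul (myCont he1)).add
      (continuous_const.mul (myCont he2))).sub continuous_const).sub
      (continuous_const.mul (myCont he3))
  have hder : ∀ t : ℝ, 0 < t → HasDerivAt F
      (t ^ (e1 - 1) * (c1 * e1 + c2 * e2 * t ^ (e2 - e1) - c4 * e3 * t ^ (e3 - e1))) t := by
    intro t ht
    have d1 : HasDerivAt (fun t : ℝ => t ^ e1) (e1 * t ^ (e1 - 1)) t :=
      Real.hasDerivAt_rpow_const (Or.inl ht.ne')
    have d2 : HasDerivAt (fun t : ℝ => t ^ e2) (e2 * t ^ (e2 - 1)) t :=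
      Real.hasDerivAt_rpow_const (Or.inl ht.ne')
    have d3 : HasDerivAt (fun t : ℝ => t ^ e3) (e3 * t ^ (e3 - 1)) t :=
      Real.hasDerivAt_rpow_const (Or.inl ht.ne')
    have := (((d1.const_mul c1).add (d2.const_mul c2)).sub_const c3).sub (d3.const_mul c4)
    refine this.congr_deriv ?_
    symm
    have q2 : t ^ (e1 - 1) * t ^ (e2 - e1) = t ^ (e2 - 1) := by
      rw [← Real.rpow_add ht, show e1 - 1 + (e2 - e1) = e2 - 1 by ring]
    have q3 : t ^ (e1 - 1) * t ^ (e3 - e1) = t ^ (e3 - 1) := by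
      rw [← Real.rpow_add ht, show e1 - 1 + (e3 - e1) = e3 - 1 by ring]
    linear_combination (c2 * e2) * q2 - c4 * e3 * q3
  obtain ⟨r, hr0, hGpos, hGneg⟩ := shape0 (c1 * e1) (c2 * e2) (c4 * e3)
    (e2 - e1) (e3 - e1) (by positivity) (by positivity) (by positivity)
    (by linarith) (by linarith)
  have hmono : StrictMonoOn F (Icc 0 r) := by
    apply strictMonoOn_of_deriv_pos (convex_Icc 0 r) hFc.continuousOn
    rw [interior_Icc]
    intro t ⟨ht0, htr⟩
    rw [(hder t ht0).deriv]
    exact mul_pos (Real.rpow_pos_of_pos ht0 _) (by have := hGpos t ht0 htr; linarith)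
  have hanti : StrictAntiOn F (Ici r) := by
    apply strictAntiOn_of_deriv_neg (convex_Ici r) hFc.continuousOn
    rw [interior_Ici]
    intro t htr
    have ht0 : 0 < t := lt_trans hr0 htr
    rw [(hder t ht0).deriv]
    have := hGneg t htr
    have := Real.rpow_pos_of_pos ht0 (e1 - 1)
    nlinarith
  have hF0 : F 0 = -c3 := by
    simp [hF, Real.zero_rpow he1.ne', Real.zero_rpow he2.ne', Real.zero_rpow he3.ne']
  obtain ⟨v, hv0, hvpos⟩ := hv
  have hFr : 0 < F r := by
    rcases le_or_gt v r with h | h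
    · rcases eq_or_lt_of_le h with rfl | h'
      · exact hvpos
      · have := hmono ⟨hv0.le, h⟩ (right_mem_Icc.2 hr0.le) h'
        exact lt_trans hvpos this
    · have := hanti (mem_Ici.2 le_rfl) (mem_Ici.2 h.le) h
      exact lt_trans hvpos this
  -- first zero
  obtain ⟨u1, hu1mem, hFu1⟩ : ∃ u1 ∈ Icc (0:ℝ) r, F u1 = 0 := by
    have := intermediate_value_Icc hr0.le (hFc.continuousOn (s := Icc 0 r))
    have h0 : (0:ℝ) ∈ Icc (F 0) (F r) := ⟨by rw [hF0]; linarith, hFr.le⟩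
    exact this h0
  have hu10 : 0 < u1 := by
    rcases eq_or_lt_of_le hu1mem.1 with h | h
    · exfalso; rw [← h, hF0] at hFu1; linarith
    · exact h
  have hu1r : u1 < r := by
    rcases eq_or_lt_of_le hu1mem.2 with h | h
    · exfalso; rw [h] at hFu1; linarith
    · exact h
  -- second zero
  obtain ⟨W, hWr, hW0, hWneg⟩ := big_neg c1 c2 c4 e1 e2 e3 h1.le h2.le h4
    he12.le he23 r
  have hFW : F W < 0 := by
    have h3' : (0:ℝ) ≤ c3 := h3.le
    simp only [hF]; linarith
  obtain ⟨u2, hu2mem, hFu2⟩ : ∃ u2 ∈ Icc r W, F u2 = 0 := by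
    have := intermediate_value_Icc' hWr (hFc.continuousOn (s := Icc r W))
    have h0 : (0:ℝ) ∈ Icc (F W) (F r) := ⟨hFW.le, hFr.le⟩
    exact this h0
  have hu2r : r < u2 := by
    rcases eq_or_lt_of_le hu2mem.1 with h | h
    · exfalso; rw [← h] at hFu2; linarith
    · exact h
  refine ⟨u1, u2, hu10, lt_trans hu1r hu2r, ?_, ?_, ?_⟩
  · intro t ht0 htu1
    have := hmono ⟨ht0.le, by linarith⟩ ⟨hu10.le, hu1r.le⟩ htu1
    show F t < 0
    rw [hFu1] at this; linarith
  · intro t htu1 htu2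
    show 0 < F t
    rcases le_or_gt t r with h | h
    · have := hmono ⟨hu10.le, hu1r.le⟩ ⟨by linarith, h⟩ htu1
      rw [hFu1] at this; linarith
    · have := hanti (mem_Ici.2 h.le) (mem_Ici.2 hu2mem.1) htu2
      rw [hFu2] at this; linarith
  · intro t htu2
    show F t < 0
    have := hanti (mem_Ici.2 hu2mem.1) (mem_Ici.2 (by linarith : r ≤ t)) htu2
    rw [hFu2] at this; linarith


lemma aux1 (a b θ q Cq c0 T u1 u2 v1 v2 w1 w2 : ℝ)
    (hq : 0 < q) (hθ0 : 0 < θ) (hCq : 0 < Cq) (hc0 : 0 < c0)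
    (h1 : 0 < u1) (h2 : 0 < v1) (h3 : 0 < v2) :
    u2 * (1 - T) * q / Cq *
      (a / (c0 * v1) * w1 + 2 / (c0 * v2) * ((b / (2 * θ)) * w2)) *
      (Cq * c0 / (2 * q)) =
      a / 2 * (1 - T) * (u2 / u1) * (u1 * w1 / v1) + b / (2 * θ) * (1 - T) * (u2 * w2 / v2) := by
  field_simp

lemma aux2 (a b θ α p q Cq Cp c0 CB D T X xqv xθv tQ : ℝ)
    (hCB : CB = 1 / (2 * p) * Cp * D) (hCBX : CB * X = T * (b / (2 * θ))) :
    a / 2 * (xqv * tQ) + b / (2 * θ) * (xθv * tQ) - α / (2 * q) * Cq * c0 * tQ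
      - 1 / (2 * p) * Cp * D * (X * (xθv * tQ)) =
      tQ * (a / 2 * xqv + b / (2 * θ) * (1 - T) * xθv - α * (Cq * c0 / (2 * q))) := by
  rw [← hCB]
  linear_combination (-(xθv * tQ)) * hCBX

set_option maxHeartbeats 1000000 in
/-- the quantitative heart of Lemma 4.3: under the `α < α₂` bound (in split form),
the comparison function is positive somewhere. -/
lemma quant (a b θ α p q Q P Cq Cp c0 D : ℝ)
    (ha : 0 < a) (hb : 0 < b) (hα0 : 0 < α) (hθ1 : 1 < θ)
    (hQ0 : 0 < Q) (hQ1 : Q < 1) (hPθ : θ < P)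
    (hq : 0 < q) (hp : 0 < p) (hCq : 0 < Cq) (hCp : 0 < Cp) (hc0 : 0 < c0) (hD : 0 < D)
    (hα : α < ((θ * (θ - Q) * (θ - 1) / (P * (P - Q) * (P - 1))) ^ ((θ - Q) / (P - θ)) -
          (θ * (θ - Q) * (θ - 1) / (P * (P - Q) * (P - 1))) ^ ((P - Q) / (P - θ))) * q / Cq *
        (a / (c0 * D ^ ((1 - Q) / (P - θ))) * (b * p / (θ * Cp)) ^ ((1 - Q) / (P - θ)) +
          2 / (c0 * D ^ ((θ - Q) / (P - θ))) *
            ((b / (2 * θ)) ^ ((P - Q) / (P - θ)) / (Cp / (2 * p)) ^ ((θ - Q) / (P - θ))))) :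
    ∃ tst, 0 < tst ∧
      0 < a / 2 * tst ^ (2:ℝ) + b / (2 * θ) * tst ^ (2 * θ)
          - α / (2 * q) * Cq * c0 * tst ^ (2 * Q) - 1 / (2 * p) * Cp * D * tst ^ (2 * P) := by
  have hθ0 : 0 < θ := by linarith
  have hP0 : 0 < P := by linarith
  have hPθ' : 0 < P - θ := by linarith
  set T : ℝ := θ * (θ - Q) * (θ - 1) / (P * (P - Q) * (P - 1)) with hTdef
  set xq : ℝ := (1 - Q) / (P - θ) with hxq
  set xθ : ℝ := (θ - Q) / (P - θ) with hxθ
  set y : ℝ := (P - Q) / (P - θ) with hy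
  set Y : ℝ := b * p / (θ * Cp) with hY
  have hYpos : 0 < Y := by positivity
  have hT0 : 0 < T := by
    apply div_pos
    · have : 0 < θ - Q := by linarith
      have : 0 < θ - 1 := by linarith
      positivity
    · have : 0 < P - Q := by linarith
      have : 0 < P - 1 := by linarith
      positivity
  have hT1 : T < 1 := by
    have hPQ : 0 < P - Q := by linarith
    have hP1 : 0 < P - 1 := by linarith
    rw [hTdef, div_lt_one (by positivity)]
    nlinarith [mul_lt_mul'' (mul_lt_mul'' hPθ (show θ - Q < P - Q by linarith)
      hθ0.le (by linarith)) (show θ - 1 < P - 1 by linarith)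
      (by nlinarith : (0:ℝ) ≤ θ * (θ - Q)) (by linarith)]
  have hyx : y = xθ + 1 := by rw [hy, hxθ]; field_simp; ring
  have hκ : T ^ xθ - T ^ y = T ^ xθ * (1 - T) := by
    rw [hyx, Real.rpow_add hT0, Real.rpow_one]; ring
  have hZ : (b / (2 * θ)) ^ y / (Cp / (2 * p)) ^ xθ = (b / (2 * θ)) * Y ^ xθ := by
    have h1 : (b / (2 * θ)) / (Cp / (2 * p)) = Y := by rw [hY]; field_simp
    calc (b / (2 * θ)) ^ y / (Cp / (2 * p)) ^ xθ
        = ((b / (2 * θ)) ^ xθ * (b / (2 * θ))) / (Cp / (2 * p)) ^ xθ := by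
          rw [hyx, Real.rpow_add (by positivity), Real.rpow_one]
      _ = (b / (2 * θ)) * ((b / (2 * θ)) ^ xθ / (Cp / (2 * p)) ^ xθ) := by ring
      _ = (b / (2 * θ)) * Y ^ xθ := by
          rw [← Real.div_rpow (by positivity) (by positivity), h1]
  rw [hκ, hZ] at hα
  -- the test point
  set CB : ℝ := 1 / (2 * p) * Cp * D with hCB
  have hCB0 : 0 < CB := by positivity
  set X : ℝ := T * (b / (2 * θ)) / CB with hX
  have hX0 : 0 < X := by positivity
  set tst : ℝ := X ^ (1 / (2 * P - 2 * θ)) with htst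
  have htst0 : 0 < tst := Real.rpow_pos_of_pos hX0 _
  have hPθ2 : 2 * P - 2 * θ ≠ 0 := by intro h; apply hPθ'.ne'; linarith
  have hpow : ∀ e1 e2 : ℝ, e1 = (1 / (2 * P - 2 * θ)) * e2 → tst ^ e2 = X ^ (e2 / (2 * P - 2 * θ)) := by
    intro e1 e2 _
    rw [htst, ← Real.rpow_mul hX0.le]
    congr 1
    field_simp
  have hts : tst ^ (2 * P - 2 * θ) = X := by
    rw [htst, ← Real.rpow_mul hX0.le, one_div, inv_mul_cancel₀ hPθ2, Real.rpow_one]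
  have ht2 : tst ^ (2 - 2 * Q) = X ^ xq := by
    rw [htst, ← Real.rpow_mul hX0.le]
    congr 1
    rw [hxq]; field_simp
  have htθ : tst ^ (2 * θ - 2 * Q) = X ^ xθ := by
    rw [htst, ← Real.rpow_mul hX0.le]
    congr 1
    rw [hxθ]; field_simp
  have e2 : tst ^ (2:ℝ) = X ^ xq * tst ^ (2 * Q) := by
    rw [← ht2, ← Real.rpow_add htst0, show 2 - 2 * Q + 2 * Q = (2:ℝ) by ring]
  have eθ : tst ^ (2 * θ) = X ^ xθ * tst ^ (2 * Q) := by
    rw [← htθ, ← Real.rpow_add htst0, show 2 * θ - 2 * Q + 2 * Q = 2 * θ by ring]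
  have eP : tst ^ (2 * P) = X * (X ^ xθ * tst ^ (2 * Q)) := by
    rw [← eθ, ← hts, ← Real.rpow_add htst0, show 2 * P - 2 * θ + 2 * θ = 2 * P by ring]
  have hCBX : CB * X = T * (b / (2 * θ)) := by
    rw [hX]; field_simp
  -- split X-powers
  have hXY : X = T * Y / D := by
    rw [hX, hCB, hY]; field_simp
  have hXq : X ^ xq = T ^ xq * Y ^ xq / D ^ xq := by
    rw [hXY, Real.div_rpow (by positivity) hD.le, Real.mul_rpow hT0.le hYpos.le]
  have hXθ : X ^ xθ = T ^ xθ * Y ^ xθ / D ^ xθ := by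
    rw [hXY, Real.div_rpow (by positivity) hD.le, Real.mul_rpow hT0.le hYpos.le]
  have hTsub : T ^ (xθ - xq) = T ^ xθ / T ^ xq := Real.rpow_sub hT0 _ _
  have hxθq : 0 < xθ - xq := by
    have h' : xθ - xq = (θ - 1) / (P - θ) := by rw [hxθ, hxq]; ring
    rw [h']; exact div_pos (by linarith) hPθ'
  clear_value T xq xθ y Y CB X tst
  -- rewrite the alpha2 bound after multiplying by `Cq * c0 / (2 * q)`
  have hA0 : 0 < Cq * c0 / (2 * q) := by positivity
  have hRHS2eq : T ^ xθ * (1 - T) * q / Cq *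
      (a / (c0 * D ^ xq) * Y ^ xq + 2 / (c0 * D ^ xθ) * ((b / (2 * θ)) * Y ^ xθ)) *
      (Cq * c0 / (2 * q)) =
      a / 2 * (1 - T) * T ^ (xθ - xq) * X ^ xq + b / (2 * θ) * (1 - T) * X ^ xθ := by
    rw [hXq, hXθ, hTsub]
    exact aux1 a b θ q Cq c0 T _ _ _ _ _ _ hq hθ0 hCq hc0
      (Real.rpow_pos_of_pos hT0 _) (Real.rpow_pos_of_pos hD _) (Real.rpow_pos_of_pos hD _)
  have h5 : α * (Cq * c0 / (2 * q)) <
      a / 2 * (1 - T) * T ^ (xθ - xq) * X ^ xq + b / (2 * θ) * (1 - T) * X ^ xθ := by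
    rw [← hRHS2eq]
    exact mul_lt_mul_of_pos_right hα hA0
  have hTpow : T ^ (xθ - xq) < 1 := Real.rpow_lt_one hT0.le hT1 hxθq
  have hTpow0 : 0 < T ^ (xθ - xq) := Real.rpow_pos_of_pos hT0 _
  have hXqpos : 0 < X ^ xq := Real.rpow_pos_of_pos hX0 _
  have hfac : 0 < a / 2 * X ^ xq * (1 - (1 - T) * T ^ (xθ - xq)) := by
    have h0 : (1 - T) * T ^ (xθ - xq) < 1 * 1 :=
      mul_lt_mul'' (by linarith) hTpow (by linarith) hTpow0.le
    have h' : 0 < 1 - (1 - T) * T ^ (xθ - xq) := by linarith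
    positivity
  have hEpos : 0 < a / 2 * X ^ xq + b / (2 * θ) * (1 - T) * X ^ xθ
      - α * (Cq * c0 / (2 * q)) := by linarith [h5, hfac]
  refine ⟨tst, htst0, ?_⟩
  have heq : a / 2 * tst ^ (2:ℝ) + b / (2 * θ) * tst ^ (2 * θ)
      - α / (2 * q) * Cq * c0 * tst ^ (2 * Q) - CB * tst ^ (2 * P) =
      tst ^ (2 * Q) * (a / 2 * X ^ xq + b / (2 * θ) * (1 - T) * X ^ xθ
        - α * (Cq * c0 / (2 * q))) := by
    rw [hCB, e2, eθ, eP]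
    exact aux2 a b θ α p q Cq Cp c0 CB D T X _ _ _ hCB hCBX
  rw [heq]
  exact mul_pos (Real.rpow_pos_of_pos htst0 _) hEpos

lemma Cconst_nonneg (N : ℕ) (μ r : ℝ) : 0 ≤ Cconst N μ r := by
  unfold Cconst
  split
  · apply Real.rpow_nonneg
    apply Real.sInf_nonneg
    rintro t ⟨u, -, -, -, rfl⟩
    apply div_nonneg
    · exact MeasureTheory.integral_nonneg fun x => by positivity
    · apply Real.rpow_nonneg
      exact MeasureTheory.integral_nonneg fun x =>
        MeasureTheory.integral_nonneg fun y => by positivity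
  · apply Real.sInf_nonneg
    rintro C ⟨hC, -⟩
    exact hC

end Statement12Aux

set_option maxHeartbeats 2000000 in
/-- **Lemma 4.3** (Statement 12): for `2_{μ,*} < q < A*`, `B* < p ≤ 2*_μ` and
`0 < α < α₂`, the comparison function `g` has a global strict maximum at a
positive level and a local strict minimum at a negative level on `[0,∞)`;
moreover there are `0 < t₀ < t₁` with `g(t₀) = g(t₁) = 0` and `g > 0` exactly
on `(t₀, t₁)`. -/
theorem statement12
    (N : ℕ) (μ a b c θ q p α : ℝ)
    (hN : 3 ≤ N) (hμ0 : 0 < μ) (hμN : μ < (N : ℝ))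
    (ha : 0 < a) (hb : 0 < b) (hc : 0 < c)
    (hθ1 : 1 < θ) (hθ2 : θ < tmu N μ)
    (hq1 : (2 * (N : ℝ) - μ) / (N : ℝ) < q) (hq2 : q < 2 + (2 - μ) / (N : ℝ))
    (hp1 : 2 + (2 * θ - μ) / (N : ℝ) < p) (hp2 : p ≤ tmu N μ)
    (hα0 : 0 < α) (hα : α < alpha2 N μ θ a b c q p) :
    (∃ tM ∈ Set.Ici (0 : ℝ), 0 < gComp N a b θ μ α q p c tM ∧
      ∀ t ∈ Set.Ici (0 : ℝ), t ≠ tM →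
        gComp N a b θ μ α q p c t < gComp N a b θ μ α q p c tM) ∧
    (∃ tm ∈ Set.Ici (0 : ℝ), gComp N a b θ μ α q p c tm < 0 ∧
      ∃ ε > (0 : ℝ), ∀ t ∈ Set.Ici (0 : ℝ), t ≠ tm → |t - tm| < ε →
        gComp N a b θ μ α q p c tm < gComp N a b θ μ α q p c t) ∧
    (∃ t₀ t₁ : ℝ, 0 < t₀ ∧ t₀ < t₁ ∧
      gComp N a b θ μ α q p c t₀ = 0 ∧ gComp N a b θ μ α q p c t₁ = 0 ∧
      ∀ t ∈ Set.Ici (0 : ℝ), (0 < gComp N a b θ μ α q p c t ↔ t₀ < t ∧ t < t₁)) := by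
    classical
  have hN3 : (3:ℝ) ≤ (N:ℝ) := by exact_mod_cast hN
  have hN0 : (0:ℝ) < N := by linarith
  have hq1' : 1 < q := by
    have h1 : (1:ℝ) < (2*(N:ℝ) - μ)/(N:ℝ) := by rw [lt_div_iff₀ hN0]; linarith
    linarith
  have hp1' : 1 < p := by
    have h1 : (-1:ℝ) < (2*θ - μ)/(N:ℝ) := by rw [lt_div_iff₀ hN0]; linarith
    linarith
  have hq0 : (0:ℝ) < q := by linarith
  have hp0 : (0:ℝ) < p := by linarith
  have hQeq : q * deltaExp N μ q = ((N:ℝ)*(q-2)+μ)/2 := by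
    unfold deltaExp; field_simp
  have hPeq : p * deltaExp N μ p = ((N:ℝ)*(p-2)+μ)/2 := by
    unfold deltaExp; field_simp
  have hQ0 : 0 < q * deltaExp N μ q := by
    rw [hQeq]
    have := (div_lt_iff₀ hN0).mp hq1
    linarith
  have hQ1 : q * deltaExp N μ q < 1 := by
    rw [hQeq]
    have h2 : q - 2 < (2 - μ)/(N:ℝ) := by linarith
    have := (lt_div_iff₀ hN0).mp h2
    linarith
  have hPθ : θ < p * deltaExp N μ p := by
    rw [hPeq]
    have h2 : (2*θ - μ)/(N:ℝ) < p - 2 := by linarith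
    have := (div_lt_iff₀ hN0).mp h2
    linarith
  have hxq0 : 0 < (1 - q * deltaExp N μ q) / (p * deltaExp N μ p - θ) :=
    div_pos (by linarith) (by linarith)
  have hxθ0 : 0 < (θ - q * deltaExp N μ q) / (p * deltaExp N μ p - θ) :=
    div_pos (by linarith) (by linarith)
  -- positivity of the sharp constants (else `alpha2 = 0`, contradicting `0 < α < alpha2`)
  rcases (Statement12Aux.Cconst_nonneg N μ p).eq_or_lt with hCp | hCp
  · exfalso
    have hz : alpha2 N μ θ a b c q p = 0 := by
      unfold alpha2
      rw [← hCp]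
      simp [Real.zero_rpow hxq0.ne', Real.zero_rpow hxθ0.ne']
    rw [hz] at hα; linarith
  rcases (Statement12Aux.Cconst_nonneg N μ q).eq_or_lt with hCq | hCq
  · exfalso
    have hz : alpha2 N μ θ a b c q p = 0 := by
      unfold alpha2
      rw [← hCq]
      simp
    rw [hz] at hα; linarith
  -- somewhere positive, from `α < α₂`
  have hsplit1 : c ^ (2*q*(1 - deltaExp N μ q) +
      2*p*(1 - deltaExp N μ p)*(1 - q*deltaExp N μ q)/(p*deltaExp N μ p - θ)) =
      c ^ (2*q*(1 - deltaExp N μ q)) *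
        (c ^ (2*p*(1 - deltaExp N μ p))) ^ ((1 - q*deltaExp N μ q)/(p*deltaExp N μ p - θ)) := by
    rw [← Real.rpow_mul hc.le, ← Real.rpow_add hc]
    congr 1
    ring
  have hsplit2 : c ^ (2*q*(1 - deltaExp N μ q) +
      2*p*(1 - deltaExp N μ p)*(θ - q*deltaExp N μ q)/(p*deltaExp N μ p - θ)) =
      c ^ (2*q*(1 - deltaExp N μ q)) *
        (c ^ (2*p*(1 - deltaExp N μ p))) ^ ((θ - q*deltaExp N μ q)/(p*deltaExp N μ p - θ)) := by
    rw [← Real.rpow_mul hc.le, ← Real.rpow_add hc]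
    congr 1
    ring
  have hα' := hα
  unfold alpha2 kappaConst at hα'
  rw [hsplit1, hsplit2] at hα'
  obtain ⟨tst, htst0, hpos⟩ := Statement12Aux.quant a b θ α p q
    (q * deltaExp N μ q) (p * deltaExp N μ p) (Cconst N μ q) (Cconst N μ p)
    (c ^ (2*q*(1 - deltaExp N μ q))) (c ^ (2*p*(1 - deltaExp N μ p)))
    ha hb hα0 hθ1 hQ0 hQ1 hPθ hq0 hp0 hCq hCp
    (Real.rpow_pos_of_pos hc _) (Real.rpow_pos_of_pos hc _) hα'
  rw [show (2:ℝ)*(q*deltaExp N μ q) = 2*q*deltaExp N μ q by ring,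
    show (2:ℝ)*(p*deltaExp N μ p) = 2*p*deltaExp N μ p by ring] at hpos
  set g := gComp N a b θ μ α q p c with hgsetdef
  have hgfun : g = fun t => a / 2 * t ^ (2:ℝ) + b / (2 * θ) * t ^ (2 * θ)
      - α / (2 * q) * Cconst N μ q * c ^ (2 * q * (1 - deltaExp N μ q)) *
          t ^ (2 * q * deltaExp N μ q)
      - 1 / (2 * p) * Cconst N μ p * c ^ (2 * p * (1 - deltaExp N μ p)) *
          t ^ (2 * p * deltaExp N μ p) := rfl
  have hg : 0 < g tst := by rw [hgfun]; exact hpos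
  set s1 := 2 * q * deltaExp N μ q with hs1
  set S1 := 2 * p * deltaExp N μ p with hS1
  set CA := α / (2 * q) * Cconst N μ q * c ^ (2 * q * (1 - deltaExp N μ q)) with hCAdef
  set CB := 1 / (2 * p) * Cconst N μ p * c ^ (2 * p * (1 - deltaExp N μ p)) with hCBdef
  have hs10 : 0 < s1 := by rw [hs1]; linarith
  have hs12 : s1 < 2 := by rw [hs1]; linarith
  have hS1θ : 2 * θ < S1 := by rw [hS1]; linarith
  have hCA0 : 0 < CA := by
    rw [hCAdef]
    exact mul_pos (mul_pos (div_pos hα0 (by linarith)) hCq) (Real.rpow_pos_of_pos hc _)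
  have hCB0 : 0 < CB := by
    rw [hCBdef]
    exact mul_pos (mul_pos (div_pos one_pos (by linarith)) hCp) (Real.rpow_pos_of_pos hc _)
  clear_value g s1 S1 CA CB
  have hθ2 : (0:ℝ) < 2 * θ := by linarith
  -- derivative of g
  have hder : ∀ t : ℝ, 0 < t → HasDerivAt g
      (t ^ (s1 - 1) * (a * t ^ (2 - s1) + b * t ^ (2 * θ - s1) - CA * s1
        - CB * S1 * t ^ (S1 - s1))) t := by
    intro t ht
    rw [hgfun]
    have d1 : HasDerivAt (fun t : ℝ => t ^ (2:ℝ)) (2 * t ^ ((2:ℝ) - 1)) t :=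
      Real.hasDerivAt_rpow_const (Or.inl ht.ne')
    have d2 : HasDerivAt (fun t : ℝ => t ^ (2 * θ)) ((2 * θ) * t ^ (2 * θ - 1)) t :=
      Real.hasDerivAt_rpow_const (Or.inl ht.ne')
    have d3 : HasDerivAt (fun t : ℝ => t ^ s1) (s1 * t ^ (s1 - 1)) t :=
      Real.hasDerivAt_rpow_const (Or.inl ht.ne')
    have d4 : HasDerivAt (fun t : ℝ => t ^ S1) (S1 * t ^ (S1 - 1)) t :=
      Real.hasDerivAt_rpow_const (Or.inl ht.ne')
    have H := (((d1.const_mul (a / 2)).add (d2.const_mul (b / (2 * θ)))).sub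
      (d3.const_mul CA)).sub (d4.const_mul CB)
    refine H.congr_deriv ?_
    symm
    have q1 : t ^ (s1 - 1) * t ^ (2 - s1) = t ^ ((2:ℝ) - 1) := by
      rw [← Real.rpow_add ht, show s1 - 1 + (2 - s1) = (2:ℝ) - 1 by ring]
    have q2 : t ^ (s1 - 1) * t ^ (2 * θ - s1) = t ^ (2 * θ - 1) := by
      rw [← Real.rpow_add ht, show s1 - 1 + (2 * θ - s1) = 2 * θ - 1 by ring]
    have q3 : t ^ (s1 - 1) * t ^ (S1 - s1) = t ^ (S1 - 1) := by
      rw [← Real.rpow_add ht, show s1 - 1 + (S1 - s1) = S1 - 1 by ring]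
    have hbθ : b / (2 * θ) * (2 * θ) = b := by field_simp
    linear_combination a * q1 + b * q2 - CB * S1 * q3 - t ^ (2 * θ - 1) * hbθ
  have hgc : Continuous g := by
    rw [hgfun]
    exact (((continuous_const.mul (Statement12Aux.myCont (by norm_num : (0:ℝ) < 2))).add
      (continuous_const.mul (Statement12Aux.myCont hθ2))).sub
      (continuous_const.mul (Statement12Aux.myCont hs10))).sub
      (continuous_const.mul (Statement12Aux.myCont (by linarith : (0:ℝ) < S1)))
  have hg0 : g 0 = 0 := by
    rw [hgfun]
    simp only [Real.zero_rpow (by norm_num : (2:ℝ) ≠ 0), Real.zero_rpow hθ2.ne',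
      Real.zero_rpow hs10.ne', Real.zero_rpow (by linarith : S1 ≠ 0)]
    ring
  -- the auxiliary function `ψ` is positive somewhere
  have hv : ∃ v, 0 < v ∧
      0 < a * v ^ (2 - s1) + b * v ^ (2 * θ - s1) - CA * s1 - CB * S1 * v ^ (S1 - s1) := by
    by_contra hcon
    push_neg at hcon
    have hanti : AntitoneOn g (Set.Ici 0) := by
      apply antitoneOn_of_deriv_nonpos (convex_Ici 0) hgc.continuousOn
      · intro t ht
        rw [interior_Ici] at ht
        exact (hder t ht).differentiableAt.differentiableWithinAt
      · intro t ht
        rw [interior_Ici] at ht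
        rw [(hder t ht).deriv]
        exact mul_nonpos_iff.mpr (Or.inl ⟨(Real.rpow_pos_of_pos ht _).le, hcon t ht⟩)
    have h0 : g tst ≤ g 0 :=
      hanti Set.self_mem_Ici (Set.mem_Ici.mpr htst0.le) htst0.le
    rw [hg0] at h0; linarith
  obtain ⟨u1, u2, hu10, hu12, sgn1, sgn2, sgn3⟩ := Statement12Aux.shape a b (CA * s1)
    (CB * S1) (2 - s1) (2 * θ - s1) (S1 - s1) ha hb (mul_pos hCA0 hs10)
    (mul_pos hCB0 (by linarith)) (by linarith) (by linarith) (by linarith) hv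
  have hu20 : 0 < u2 := hu10.trans hu12
  -- monotonicity pattern of g
  have M1 : StrictAntiOn g (Set.Icc 0 u1) := by
    apply strictAntiOn_of_deriv_neg (convex_Icc _ _) hgc.continuousOn
    rw [interior_Icc]
    rintro t ⟨ht0, htu⟩
    rw [(hder t ht0).deriv]
    exact mul_neg_of_pos_of_neg (Real.rpow_pos_of_pos ht0 _) (sgn1 t ht0 htu)
  have M2 : StrictMonoOn g (Set.Icc u1 u2) := by
    apply strictMonoOn_of_deriv_pos (convex_Icc _ _) hgc.continuousOn
    rw [interior_Icc]
    rintro t ⟨ht1, ht2⟩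
    have ht0 : 0 < t := hu10.trans ht1
    rw [(hder t ht0).deriv]
    exact mul_pos (Real.rpow_pos_of_pos ht0 _) (sgn2 t ht1 ht2)
  have M3 : StrictAntiOn g (Set.Ici u2) := by
    apply strictAntiOn_of_deriv_neg (convex_Ici _) hgc.continuousOn
    rw [interior_Ici]
    intro t ht
    have ht0 : 0 < t := hu20.trans ht
    rw [(hder t ht0).deriv]
    exact mul_neg_of_pos_of_neg (Real.rpow_pos_of_pos ht0 _) (sgn3 t ht)
  have hgu1 : g u1 < 0 := by
    have := M1 (Set.left_mem_Icc.2 hu10.le) (Set.right_mem_Icc.2 hu10.le) hu10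
    rw [hg0] at this; linarith
  have hgu2 : 0 < g u2 := by
    rcases le_or_gt tst u1 with h | h
    · exfalso
      have := M1.antitoneOn ⟨le_rfl, hu10.le⟩ ⟨htst0.le, h⟩ htst0.le
      rw [hg0] at this; linarith
    · rcases le_or_gt tst u2 with h2 | h2
      · have := M2.monotoneOn ⟨h.le, h2⟩ ⟨hu12.le, le_rfl⟩ h2
        linarith
      · have := M3 (Set.mem_Ici.2 le_rfl) (Set.mem_Ici.2 h2.le) h2
        linarith
  refine ⟨⟨u2, Set.mem_Ici.2 hu20.le, hgu2, ?_⟩, ?_, ?_⟩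
  · -- global strict maximum at u2
    intro t ht htne
    rw [Set.mem_Ici] at ht
    rcases le_or_gt t u1 with h | h
    · have h1 := M1.antitoneOn (Set.left_mem_Icc.2 hu10.le) ⟨ht, h⟩ ht
      rw [hg0] at h1; linarith
    · rcases lt_trichotomy t u2 with h2 | h2 | h2
      · exact M2 ⟨h.le, h2.le⟩ ⟨hu12.le, le_rfl⟩ h2
      · exact absurd h2 htne
      · exact M3 (Set.mem_Ici.2 le_rfl) (Set.mem_Ici.2 h2.le) h2
  · -- local strict minimum at u1
    refine ⟨u1, Set.mem_Ici.2 hu10.le, hgu1, min u1 (u2 - u1),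
      lt_min hu10 (by linarith), ?_⟩
    intro t ht htne habs
    rw [Set.mem_Ici] at ht
    rcases lt_or_gt_of_ne htne with h | h
    · exact M1 ⟨ht, h.le⟩ (Set.right_mem_Icc.2 hu10.le) h
    · have h2 : t - u1 < u2 - u1 :=
        lt_of_lt_of_le (lt_of_abs_lt habs) (min_le_right _ _)
      exact M2 (Set.left_mem_Icc.2 hu12.le) ⟨h.le, by linarith⟩ h
  · -- the two zeros
    obtain ⟨t₀, ht₀mem, hgt₀⟩ : ∃ t₀ ∈ Set.Icc u1 u2, g t₀ = 0 := by
      have := intermediate_value_Icc hu12.le (hgc.continuousOn (s := Set.Icc u1 u2))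
      exact this ⟨hgu1.le, hgu2.le⟩
    have ht₀u1 : u1 < t₀ := by
      rcases eq_or_lt_of_le ht₀mem.1 with h | h
      · exfalso; rw [← h] at hgt₀; linarith
      · exact h
    have ht₀u2 : t₀ < u2 := by
      rcases eq_or_lt_of_le ht₀mem.2 with h | h
      · exfalso; rw [h] at hgt₀; linarith
      · exact h
    obtain ⟨W, hWu2, hW0, hWlt⟩ := Statement12Aux.big_neg (a / 2) (b / (2 * θ)) CB
      (2:ℝ) (2 * θ) S1 (by positivity) (by positivity) hCB0 (by linarith) hS1θ u2
    have hgW : g W < 0 := by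
      have hws : 0 < CA * W ^ s1 := mul_pos hCA0 (Real.rpow_pos_of_pos hW0 _)
      rw [hgfun]
      dsimp only
      linarith
    obtain ⟨t₁, ht₁mem, hgt₁⟩ : ∃ t₁ ∈ Set.Icc u2 W, g t₁ = 0 := by
      have := intermediate_value_Icc' hWu2 (hgc.continuousOn (s := Set.Icc u2 W))
      exact this ⟨hgW.le, hgu2.le⟩
    have ht₁u2 : u2 < t₁ := by
      rcases eq_or_lt_of_le ht₁mem.1 with h | h
      · exfalso; rw [← h] at hgt₁; linarith
      · exact h
    refine ⟨t₀, t₁, hu10.trans ht₀u1, ht₀u2.trans ht₁u2, hgt₀, hgt₁, ?_⟩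
    intro t ht
    rw [Set.mem_Ici] at ht
    constructor
    · intro hgt
      constructor
      · by_contra hcon
        push_neg at hcon
        rcases le_or_gt t u1 with h | h
        · have h1 := M1.antitoneOn (Set.left_mem_Icc.2 hu10.le) ⟨ht, h⟩ ht
          rw [hg0] at h1; linarith
        · have h1 := M2.monotoneOn ⟨h.le, hcon.trans ht₀u2.le⟩
            ⟨ht₀u1.le, ht₀u2.le⟩ hcon
          rw [hgt₀] at h1; linarith
      · by_contra hcon
        push_neg at hcon
        have h1 := M3.antitoneOn (Set.mem_Ici.2 ht₁u2.le)
          (Set.mem_Ici.2 (ht₁u2.le.trans hcon)) hcon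
        rw [hgt₁] at h1; linarith
    · rintro ⟨h₀, h₁⟩
      rcases le_or_gt t u2 with h | h
      · have h1 := M2 ⟨ht₀u1.le, ht₀u2.le⟩ ⟨ht₀u1.le.trans h₀.le, h⟩ h₀
        rw [hgt₀] at h1; linarith
      · have h1 := M3 (Set.mem_Ici.2 h.le) (Set.mem_Ici.2 ht₁u2.le) h₁
        rw [hgt₁] at h1; linarith
end
end

section
/- Let θ > 1, a₁, a₂, a₃, a₄ ∈ (0,∞) and p₁, q₁ ∈ (2θ,∞). Then the function h(t) = a₁t² + a₂t^{2θ} − a₃t^{p₁} − a₄t^{q₁} has a unique maximum point on [0,∞), and the maximum value h attains there is positive. -/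
/- Common framework for normalized solutions of Kirchhoff-Choquard equations
   (Goel-Gupta, "Normalized Solutions to the Kirchhoff-Choquard Equations with
   Combined Growth"). Functions are modelled as `u : EuclideanSpace ℝ (Fin N) → ℝ`. -/

open MeasureTheory Real Filter Topology RealInnerProductSpace

noncomputable section

/-- **Lemma 5.1** (Statement 16): for `p₁, q₁ ∈ (2θ, ∞)`, `h` has a unique
maximum point on `[0,∞)`, at a positive level. -/
theorem statement16
    (θ a1 a2 a3 a4 p1 q1 : ℝ)
    (hθ : 1 < θ)
    (ha1 : 0 < a1) (ha2 : 0 < a2) (ha3 : 0 < a3) (ha4 : 0 < a4)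
    (hp1 : 2 * θ < p1) (hq1 : 2 * θ < q1) :
    ∃ tM ∈ Set.Ici (0 : ℝ),
      0 < hfun θ a1 a2 a3 a4 p1 q1 tM ∧
      (∀ t ∈ Set.Ici (0 : ℝ), hfun θ a1 a2 a3 a4 p1 q1 t ≤ hfun θ a1 a2 a3 a4 p1 q1 tM) ∧
      ∀ t ∈ Set.Ici (0 : ℝ),
        (∀ s ∈ Set.Ici (0 : ℝ), hfun θ a1 a2 a3 a4 p1 q1 s ≤ hfun θ a1 a2 a3 a4 p1 q1 t) →
        t = tM := by
  have hθ2 : (0:ℝ) < 2*θ - 2 := by linarith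
  set h : ℝ → ℝ := hfun θ a1 a2 a3 a4 p1 q1 with hh
  set k : ℝ → ℝ := fun t => 2*a1 * t ^ (2 - 2*θ) + 2*θ*a2 - p1*a3 * t ^ (p1 - 2*θ)
      - q1*a4 * t ^ (q1 - 2*θ) with hk
  -- continuity of h
  have hcont : Continuous h := by
    have hc : ∀ c : ℝ, 0 < c → Continuous (fun t:ℝ => t ^ c) :=
      fun c hc => Real.continuous_rpow_const hc.le
    exact (((continuous_const.mul (hc 2 (by norm_num))).add
      (continuous_const.mul (hc (2*θ) (by linarith)))).sub
      (continuous_const.mul (hc p1 (by linarith)))).sub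
      (continuous_const.mul (hc q1 (by linarith)))
  -- derivative of h
  have hd : ∀ t : ℝ, 0 < t → HasDerivAt h (t ^ (2*θ - 1) * k t) t := by
    intro t ht
    have D : ∀ c : ℝ, HasDerivAt (fun s:ℝ => s ^ c) (c * t ^ (c - 1)) t :=
      fun c => Real.hasDerivAt_rpow_const (Or.inl ht.ne')
    have H : HasDerivAt h (a1 * (2 * t ^ ((2:ℝ) - 1)) + a2 * (2*θ * t ^ (2*θ - 1))
        - a3 * (p1 * t ^ (p1 - 1)) - a4 * (q1 * t ^ (q1 - 1))) t :=
      ((((D 2).const_mul a1).add ((D (2*θ)).const_mul a2)).sub ((D p1).const_mul a3)).sub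
        ((D q1).const_mul a4)
    have e : ∀ c : ℝ, t ^ (2*θ - 1) * t ^ (c - 2*θ) = t ^ (c - 1) := by
      intro c
      rw [← Real.rpow_add ht]
      congr 1
      ring
    convert H using 1
    simp only [hk]
    calc t ^ (2*θ - 1) * (2*a1 * t ^ (2 - 2*θ) + 2*θ*a2 - p1*a3 * t ^ (p1 - 2*θ)
            - q1*a4 * t ^ (q1 - 2*θ))
        = 2*a1 * (t ^ (2*θ - 1) * t ^ ((2:ℝ) - 2*θ)) + 2*θ*a2 * t ^ (2*θ - 1)
          - p1*a3 * (t ^ (2*θ - 1) * t ^ (p1 - 2*θ))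
          - q1*a4 * (t ^ (2*θ - 1) * t ^ (q1 - 2*θ)) := by ring
      _ = 2*a1 * t ^ ((2:ℝ) - 1) + 2*θ*a2 * t ^ (2*θ - 1) - p1*a3 * t ^ (p1 - 1)
          - q1*a4 * t ^ (q1 - 1) := by rw [e 2, e p1, e q1]
      _ = a1 * (2 * t ^ ((2:ℝ) - 1)) + a2 * (2*θ * t ^ (2*θ - 1)) - a3 * (p1 * t ^ (p1 - 1))
          - a4 * (q1 * t ^ (q1 - 1)) := by ring
  -- k is strictly decreasing on (0, ∞)
  have hkanti : StrictAntiOn k (Set.Ioi (0:ℝ)) := by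
    intro x hx y hy hxy
    have h1 : y ^ (2 - 2*θ) < x ^ (2 - 2*θ) :=
      Real.rpow_lt_rpow_of_neg hx hxy (by linarith)
    have h2 : x ^ (p1 - 2*θ) < y ^ (p1 - 2*θ) :=
      Real.rpow_lt_rpow (le_of_lt hx) hxy (by linarith)
    have h3 : x ^ (q1 - 2*θ) < y ^ (q1 - 2*θ) :=
      Real.rpow_lt_rpow (le_of_lt hx) hxy (by linarith)
    simp only [hk]
    have m1 : 2*a1 * y ^ (2 - 2*θ) < 2*a1 * x ^ (2 - 2*θ) :=
      mul_lt_mul_of_pos_left h1 (by linarith)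
    have m2 : p1*a3 * x ^ (p1 - 2*θ) < p1*a3 * y ^ (p1 - 2*θ) :=
      mul_lt_mul_of_pos_left h2 (by nlinarith)
    have m3 : q1*a4 * x ^ (q1 - 2*θ) < q1*a4 * y ^ (q1 - 2*θ) :=
      mul_lt_mul_of_pos_left h3 (by nlinarith)
    linarith
  -- k > 0 somewhere near 0
  have l3 : Filter.Tendsto k (nhdsWithin 0 (Set.Ioi 0)) Filter.atTop := by
    have base : Filter.Tendsto (fun t:ℝ => 2*a1 * t ^ (2 - 2*θ)) (nhdsWithin 0 (Set.Ioi 0))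
        Filter.atTop := by
      have comp : Filter.Tendsto (fun t:ℝ => (t⁻¹) ^ (2*θ - 2)) (nhdsWithin 0 (Set.Ioi 0))
          Filter.atTop := (tendsto_rpow_atTop hθ2).comp tendsto_inv_nhdsGT_zero
      have congr : Filter.Tendsto (fun t:ℝ => t ^ (2 - 2*θ)) (nhdsWithin 0 (Set.Ioi 0))
          Filter.atTop := by
        refine comp.congr' ?_
        filter_upwards [self_mem_nhdsWithin] with t (ht : (0:ℝ) < t)
        rw [Real.inv_rpow ht.le, ← Real.rpow_neg ht.le]
        congr 1
        ring
      exact congr.const_mul_atTop (by linarith)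
    have rest : Filter.Tendsto (fun t:ℝ => 2*θ*a2 - p1*a3 * t ^ (p1 - 2*θ)
        - q1*a4 * t ^ (q1 - 2*θ)) (nhdsWithin 0 (Set.Ioi 0))
        (nhds (2*θ*a2 - p1*a3 * (0:ℝ) ^ (p1 - 2*θ) - q1*a4 * (0:ℝ) ^ (q1 - 2*θ))) := by
      have c1 : Continuous (fun t:ℝ => 2*θ*a2 - p1*a3 * t ^ (p1 - 2*θ)
          - q1*a4 * t ^ (q1 - 2*θ)) :=
        (continuous_const.sub
          (continuous_const.mul (Real.continuous_rpow_const (by linarith)))).sub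
          (continuous_const.mul (Real.continuous_rpow_const (by linarith)))
      exact (c1.tendsto 0).mono_left nhdsWithin_le_nhds
    have := base.atTop_add rest
    refine this.congr fun t => by simp only [hk]; ring
  obtain ⟨t1, hkt1, ht1pos⟩ :
      ∃ t1 : ℝ, 0 < k t1 ∧ 0 < t1 :=
    ((l3.eventually_gt_atTop 0).and self_mem_nhdsWithin).exists
  -- k < 0 somewhere far out
  have l4 : Filter.Tendsto (fun t => -k t) Filter.atTop Filter.atTop := by
    have base : Filter.Tendsto (fun t:ℝ => q1*a4 * t ^ (q1 - 2*θ)) Filter.atTop Filter.atTop :=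
      (tendsto_rpow_atTop (by linarith)).const_mul_atTop (by nlinarith)
    have base2 : Filter.Tendsto (fun t:ℝ => q1*a4 * t ^ (q1 - 2*θ) + p1*a3 * t ^ (p1 - 2*θ))
        Filter.atTop Filter.atTop :=
      Tendsto.atTop_add_atTop base ((tendsto_rpow_atTop (by linarith)).const_mul_atTop (by nlinarith))
    have rest : Filter.Tendsto (fun t:ℝ => -(2*a1) * t ^ (-(2*θ - 2)) - 2*θ*a2) Filter.atTop
        (nhds (-(2*a1) * 0 - 2*θ*a2)) :=
      ((tendsto_rpow_neg_atTop hθ2).const_mul _).sub_const _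
    have := base2.atTop_add rest
    refine this.congr fun t => by simp only [hk]; rw [show -(2*θ - 2) = 2 - 2*θ by ring]; ring
  obtain ⟨t2, hkt2, ht12⟩ : ∃ t2 : ℝ, 0 < -k t2 ∧ t1 < t2 :=
    ((l4.eventually_gt_atTop 0).and (Filter.eventually_gt_atTop t1)).exists
  have hkt2' : k t2 < 0 := by linarith
  -- first zero of k
  have hkcont : ContinuousOn k (Set.Icc t1 t2) := by
    intro t ht
    have htpos : 0 < t := lt_of_lt_of_le ht1pos ht.1
    have hc : ∀ c : ℝ, ContinuousAt (fun s:ℝ => s ^ c) t :=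
      fun c => Real.continuousAt_rpow_const t c (Or.inl htpos.ne')
    exact ContinuousAt.continuousWithinAt
      (((((hc _).const_mul _).add continuousAt_const).sub ((hc _).const_mul _)).sub
        ((hc _).const_mul _))
  obtain ⟨ts, hts, hkts⟩ : ∃ ts ∈ Set.Icc t1 t2, k ts = 0 :=
    intermediate_value_Icc' (le_of_lt ht12) hkcont ⟨le_of_lt hkt2', le_of_lt hkt1⟩
  have htspos : 0 < ts := lt_of_lt_of_le ht1pos hts.1
  -- h strictly increasing on [0, ts], strictly decreasing on [ts, ∞)
  have hmono : StrictMonoOn h (Set.Icc 0 ts) := by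
    apply strictMonoOn_of_deriv_pos (convex_Icc _ _) hcont.continuousOn
    intro t ht
    rw [interior_Icc] at ht
    rw [(hd t ht.1).deriv]
    have hkt : 0 < k t := hkts ▸ hkanti ht.1 htspos ht.2
    exact mul_pos (Real.rpow_pos_of_pos ht.1 _) hkt
  have hanti : StrictAntiOn h (Set.Ici ts) := by
    apply strictAntiOn_of_deriv_neg (convex_Ici _) hcont.continuousOn
    intro t ht
    rw [interior_Ici] at ht
    rw [(hd t (htspos.trans ht)).deriv]
    have hkt : k t < 0 := hkts ▸ hkanti htspos (htspos.trans ht) ht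
    exact mul_neg_of_pos_of_neg (Real.rpow_pos_of_pos (htspos.trans ht) _) hkt
  have h0 : h 0 = 0 := by
    simp only [hh, hfun, Real.zero_rpow (show (2:ℝ) ≠ 0 by norm_num),
      Real.zero_rpow (show 2*θ ≠ 0 by nlinarith), Real.zero_rpow (show p1 ≠ 0 by nlinarith),
      Real.zero_rpow (show q1 ≠ 0 by nlinarith)]
    ring
  refine ⟨ts, le_of_lt htspos, ?_, ?_, ?_⟩
  · have := hmono ⟨le_refl 0, le_of_lt htspos⟩ ⟨le_of_lt htspos, le_refl ts⟩ htspos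
    rw [h0] at this
    exact this
  · intro t htmem
    rcases le_total t ts with hle | hle
    · exact hmono.monotoneOn ⟨htmem, hle⟩ ⟨le_of_lt htspos, le_refl ts⟩ hle
    · exact hanti.antitoneOn (Set.self_mem_Ici) hle hle
  · intro t htmem hmax
    by_contra hne
    have hle := hmax ts (le_of_lt htspos)
    rcases lt_or_gt_of_ne hne with hlt | hgt
    · have : h t < h ts := hmono ⟨htmem, le_of_lt hlt⟩ ⟨le_of_lt htspos, le_refl ts⟩ hlt
      linarith
    · have : h t < h ts := hanti Set.self_mem_Ici (le_of_lt hgt) hgt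
      linarith
end
end
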